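/- arXiv:2308.06044 — 2 statements merged into one kernel-verified Lean document; each statement's English description precedes it below -/
import Mathlib

section
/- Let k, q ≥ 1 and let F ∈ GL^k_q. Then for each m ≥ 0 there is a formula φ_m ∈ GC^k_q such that for every k-labelled graph G whose set of assigned labels contains the set of assigned labels of F, hom(F,G) = m if and only if G ⊨ φ_m. -/
set_option maxHeartbeats 1000000

/-! ## Bundled finite simple graphs and homomorphism counting -/

/-- A bundled finite simple graph (vertex set `Fin n`). -/
abbrev GraphB : Type := Σ n : ℕ, SimpleGraph (Fin n)

/-- The number of graph homomorphisms from `F` to `G`. -/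
noncomputable def homCount {V W : Type*} (F : SimpleGraph V) (G : SimpleGraph W) : ℕ :=
  Set.ncard {f : V → W | ∀ ⦃u v⦄, F.Adj u v → G.Adj (f u) (f v)}

/-- `G` and `H` are homomorphism indistinguishable over the class `𝓕`. -/
def HomIndist (𝓕 : Set GraphB) {V W : Type*} (G : SimpleGraph V) (H : SimpleGraph W) : Prop :=
  ∀ A ∈ 𝓕, homCount A.2 G = homCount A.2 H

/-- The homomorphism distinguishing closure of the class `𝓕`. -/
def hdCl (𝓕 : Set GraphB) : Set GraphB :=
  {A | ∀ G H : GraphB, HomIndist 𝓕 G.2 H.2 → homCount A.2 G.2 = homCount A.2 H.2}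

/-! ## Pebble forest covers and the class `T^k_q` -/

/-- A `k`-pebble forest cover of depth at most `q`.  The rooted forest is encoded by its
ancestor (partial) order `le`, in which the set of ancestors of any vertex is a chain. -/
structure PebbleForestCover {V : Type*} (G : SimpleGraph V) (k q : ℕ) where
  le : V → V → Prop
  le_refl : ∀ v, le v v
  le_antisymm : ∀ u v, le u v → le v u → u = v
  le_trans : ∀ u v w, le u v → le v w → le u w
  downChain : ∀ u v w, le u w → le v w → le u v ∨ le v u
  peb : V → Fin k
  cover : ∀ ⦃u v⦄, G.Adj u v → le u v ∨ le v u
  pebbleCond : ∀ ⦃u v w⦄, G.Adj u v → le u v → le u w → le w v → u ≠ w → peb u ≠ peb w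
  heightLE : ∀ v, Set.ncard {u | le u v} ≤ q

def HasPFC {V : Type*} (G : SimpleGraph V) (k q : ℕ) : Prop :=
  Nonempty (PebbleForestCover G k q)

/-- The class `T^k_q` of graphs admitting a `k`-pebble forest cover of depth at most `q`. -/
def Tclass (k q : ℕ) : Set GraphB := {G | HasPFC G.2 k q}

/-! ## Forest covers, treedepth, tree decompositions, treewidth -/

/-- `G` has a forest cover of height at most `q`, i.e. treedepth at most `q`. -/
def HasForestCover {V : Type*} (G : SimpleGraph V) (q : ℕ) : Prop :=
  ∃ le : V → V → Prop,
    (∀ v, le v v) ∧ (∀ u v, le u v → le v u → u = v) ∧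
    (∀ u v w, le u v → le v w → le u w) ∧
    (∀ u v w, le u w → le v w → le u v ∨ le v u) ∧
    (∀ ⦃u v⦄, G.Adj u v → le u v ∨ le v u) ∧
    (∀ v, Set.ncard {u | le u v} ≤ q)

/-- The class `TD_q` of graphs of treedepth at most `q`. -/
def TDclass (q : ℕ) : Set GraphB := {G | HasForestCover G.2 q}

/-- A tree decomposition of `G`. -/
structure TreeDecomp {V : Type*} (G : SimpleGraph V) where
  n : ℕ
  T : SimpleGraph (Fin n)
  isTree : T.IsTree
  bag : Fin n → Set V
  coversVerts : ∀ v : V, ∃ t, v ∈ bag t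
  coversEdges : ∀ ⦃u v⦄, G.Adj u v → ∃ t, u ∈ bag t ∧ v ∈ bag t
  bagsConnected : ∀ v : V, (SimpleGraph.induce {t | v ∈ bag t} T).Connected

/-- The decomposition has width at most `w`. -/
def TreeDecomp.widthLE {V : Type*} {G : SimpleGraph V} (d : TreeDecomp G) (w : ℕ) : Prop :=
  ∀ t, (d.bag t).ncard ≤ w + 1

/-- `t` lies on the (unique) path from `r` to `s` in the tree `d.T`,
i.e. `t` is an ancestor of `s` when `d.T` is rooted at `r`. -/
def TreeDecomp.anc {V : Type*} {G : SimpleGraph V} (d : TreeDecomp G) (r t s : Fin d.n) : Prop :=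
  ∀ w : d.T.Walk r s, t ∈ w.support

/-- The decomposition has depth at most `q`: for some root `r`, for every node `s`,
the union of the bags of ancestors of `s` has at most `q` vertices. -/
def TreeDecomp.depthLE {V : Type*} {G : SimpleGraph V} (d : TreeDecomp G) (q : ℕ) : Prop :=
  ∃ r : Fin d.n, ∀ s : Fin d.n, (⋃ t ∈ {t | d.anc r t s}, d.bag t).ncard ≤ q

/-- The class `TW_w` of graphs of treewidth at most `w`. -/
def TWclass (w : ℕ) : Set GraphB := {G | ∃ d : TreeDecomp G.2, d.widthLE w}

/-! ## Minors and disjoint unions -/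

/-- `H` is a minor of `G`: there are pairwise disjoint connected nonempty branch sets in `G`,
one for each vertex of `H`, such that edges of `H` are realised between branch sets. -/
def IsMinor {W V : Type*} (H : SimpleGraph W) (G : SimpleGraph V) : Prop :=
  ∃ φ : V → Option W,
    (∀ w : W, (SimpleGraph.induce {v | φ v = some w} G).Connected) ∧
    (∀ ⦃w₁ w₂⦄, H.Adj w₁ w₂ → ∃ v₁ v₂, φ v₁ = some w₁ ∧ φ v₂ = some w₂ ∧ G.Adj v₁ v₂)

/-- The disjoint union of two simple graphs. -/
def sumGraph {V W : Type*} (G : SimpleGraph V) (H : SimpleGraph W) : SimpleGraph (V ⊕ W) where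
  Adj x y :=
    match x, y with
    | Sum.inl a, Sum.inl b => G.Adj a b
    | Sum.inr a, Sum.inr b => H.Adj a b
    | _, _ => False
  symm := by
    refine ⟨?_⟩
    rintro (a | a) (b | b) h
    · exact G.adj_symm h
    · exact h.elim
    · exact h.elim
    · exact H.adj_symm h
  loopless := by
    refine ⟨?_⟩
    rintro (a | a) h
    · exact G.irrefl h
    · exact H.irrefl h

/-! ## Cops-and-robber games -/

/-- A robber move from `v` to `u`: a walk in `G` none of whose vertices lies in `A`
(`A` will be `X ∩ Y` for old/new cop positions `X`, `Y` on `G` plus a `k`-clique). -/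
def RobberMove {V : Type*} {k : ℕ} (G : SimpleGraph V) (A : Finset (V ⊕ Fin k)) (v u : V) :
    Prop :=
  ∃ w : G.Walk v u, ∀ x ∈ w.support, Sum.inl x ∉ A

/-- The initial cop position: all `k` cops on the auxiliary clique. -/
def initPos (V : Type*) [DecidableEq V] (k : ℕ) : Finset (V ⊕ Fin k) :=
  Finset.univ.image Sum.inr

/-- In the (non-monotone) cops-and-robber game on `G` with `k` cops, from cop position `X`
and robber position `v`, Cops can catch the robber within `q` further rounds. -/
def CopsCatch {V : Type*} [DecidableEq V] (G : SimpleGraph V) (k : ℕ) :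
    ℕ → Finset (V ⊕ Fin k) → V → Prop
  | 0, _, _ => False
  | q + 1, X, v =>
      ∃ Y : Finset (V ⊕ Fin k), Y.card = k ∧ (X ∩ Y).card = k - 1 ∧
        ∀ u : V, RobberMove G (X ∩ Y) v u → (Sum.inl u ∈ Y ∨ CopsCatch G k q Y u)

/-- Monotone variant: Cops may only move so that the robber escape space does not grow. -/
def MonCopsCatch {V : Type*} [DecidableEq V] (G : SimpleGraph V) (k : ℕ) :
    ℕ → Finset (V ⊕ Fin k) → V → Prop
  | 0, _, _ => False
  | q + 1, X, v =>
      ∃ Y : Finset (V ⊕ Fin k), Y.card = k ∧ (X ∩ Y).card = k - 1 ∧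
        (∀ u : V, RobberMove G (X ∩ Y) v u → RobberMove G X v u) ∧
        ∀ u : V, RobberMove G (X ∩ Y) v u → (Sum.inl u ∈ Y ∨ MonCopsCatch G k q Y u)

/-- Robber can evade capture for `q` further rounds from cop position `X`, robber at `v`. -/
def RobberEsc {V : Type*} [DecidableEq V] (G : SimpleGraph V) (k : ℕ) :
    ℕ → Finset (V ⊕ Fin k) → V → Prop
  | 0, _, _ => True
  | q + 1, X, v =>
      ∀ Y : Finset (V ⊕ Fin k), Y.card = k → (X ∩ Y).card = k - 1 →
        ∃ u : V, RobberMove G (X ∩ Y) v u ∧ Sum.inl u ∉ Y ∧ RobberEsc G k q Y u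

/-- Cops has a winning strategy in the `q`-round `k`-cops-and-robber game on `G`. -/
def CopsWinGame {V : Type*} [DecidableEq V] (G : SimpleGraph V) (k q : ℕ) : Prop :=
  ∀ v : V, CopsCatch G k q (initPos V k) v

/-- Cops has a winning strategy in the monotone `q`-round `k`-cops-and-robber game on `G`. -/
def MonCopsWinGame {V : Type*} [DecidableEq V] (G : SimpleGraph V) (k q : ℕ) : Prop :=
  ∀ v : V, MonCopsCatch G k q (initPos V k) v

/-- Robber has a winning strategy in the `q`-round `k`-cops-and-robber game on `G`. -/
def RobberWinsGame {V : Type*} [DecidableEq V] (G : SimpleGraph V) (k q : ℕ) : Prop :=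
  ∃ v : V, RobberEsc G k q (initPos V k) v

/-- The `h × ℓ` grid graph. -/
def gridGraph (h l : ℕ) : SimpleGraph (Fin h × Fin l) :=
  (SimpleGraph.pathGraph h).boxProd (SimpleGraph.pathGraph l)

/-! ## The CFI-like construction `G_U` -/

/-- Vertices of `G_U`: pairs `(v, S)` with `S` a set of edges incident to `v` whose
parity matches `|{v} ∩ U|`. -/
def CFIvert {V : Type*} (G : SimpleGraph V) (U : Set V) : Type _ :=
  {p : V × Set (Sym2 V) // p.2 ⊆ G.incidenceSet p.1 ∧ (Even p.2.ncard ↔ p.1 ∉ U)}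

/-- The CFI-like graph `G_U` of Roberson. -/
def CFI {V : Type*} (G : SimpleGraph V) (U : Set V) : SimpleGraph (CFIvert G U) where
  Adj x y := G.Adj x.1.1 y.1.1 ∧ s(x.1.1, y.1.1) ∉ symmDiff x.1.2 y.1.2
  symm := by
    refine ⟨?_⟩
    rintro x y ⟨h1, h2⟩
    refine ⟨h1.symm, ?_⟩
    rw [Sym2.eq_swap, symmDiff_comm]
    exact h2
  loopless := by
    refine ⟨?_⟩
    rintro x ⟨h1, _⟩
    exact G.irrefl h1

/-! ## Counting first-order logic -/

/-- Formulae of first-order counting logic `C` with variables indexed by `α`. -/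
inductive CForm (α : Type) : Type
  | eq : α → α → CForm α
  | adj : α → α → CForm α
  | not : CForm α → CForm α
  | or : CForm α → CForm α → CForm α
  | and : CForm α → CForm α → CForm α
  | count : ℕ → α → CForm α → CForm α

namespace CForm

variable {α : Type} [DecidableEq α]

/-- Quantifier rank. -/
def qr : CForm α → ℕ
  | eq _ _ => 0
  | adj _ _ => 0
  | not φ => qr φ
  | or φ ψ => max (qr φ) (qr ψ)
  | and φ ψ => max (qr φ) (qr ψ)
  | count _ _ φ => qr φ + 1

/-- Free variables. -/
def freeVars : CForm α → Finset α
  | eq i j => {i, j}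
  | adj i j => {i, j}
  | not φ => freeVars φ
  | or φ ψ => freeVars φ ∪ freeVars ψ
  | and φ ψ => freeVars φ ∪ freeVars ψ
  | count _ i φ => (freeVars φ).erase i

/-- Satisfaction in a simple graph, relative to a partial variable assignment. -/
def Sat {V : Type*} (G : SimpleGraph V) : CForm α → (α → Option V) → Prop
  | eq i j, a => ∃ v, a i = some v ∧ a j = some v
  | adj i j, a => ∃ v w, a i = some v ∧ a j = some w ∧ G.Adj v w
  | not φ, a => ¬ Sat G φ a
  | or φ ψ, a => Sat G φ a ∨ Sat G ψ a
  | and φ ψ, a => Sat G φ a ∧ Sat G ψ a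
  | count t i φ, a =>
      ∃ s : Finset V, t ≤ s.card ∧ ∀ v ∈ s, Sat G φ (fun j => if j = i then some v else a j)

/-- Guarded formulae: every quantifier occurs as `∃^{≥t} y (E x y ∧ ψ)` with `x ≠ y`. -/
def Guarded : CForm α → Prop
  | count _ y (and (adj x y') χ) => y' = y ∧ x ≠ y ∧ Guarded χ
  | count _ _ _ => False
  | eq _ _ => True
  | adj _ _ => True
  | not φ => Guarded φ
  | or φ ψ => Guarded φ ∧ Guarded ψ
  | and φ ψ => Guarded φ ∧ Guarded ψ

end CForm

/-! ## Labelled graphs, products, construction trees -/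

/-- A `k`-labelled finite graph. -/
structure LGraph (k : ℕ) : Type 1 where
  V : Type
  fin : Finite V
  G : SimpleGraph V
  ν : Fin k → Option V

namespace LGraph

variable {k : ℕ}

/-- Number of homomorphisms between `k`-labelled graphs. -/
noncomputable def lhomCount (F G : LGraph k) : ℕ :=
  Set.ncard {f : F.V → G.V |
    (∀ ⦃u v⦄, F.G.Adj u v → G.G.Adj (f u) (f v)) ∧
    ∀ i v, F.ν i = some v → ∃ w, G.ν i = some w ∧ f v = w}

/-- Remove label `i`. -/
def removeLabel (A : LGraph k) (i : Fin k) : LGraph k :=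
  { A with ν := fun j => if j = i then none else A.ν j }

/-- Every vertex carries at least one label. -/
def FullyLabelled (A : LGraph k) : Prop := ∀ v : A.V, ∃ i, A.ν i = some v

/-- Adjacency on the disjoint sum of two labelled graphs. -/
def sumAdj (A B : LGraph k) : A.V ⊕ B.V → A.V ⊕ B.V → Prop
  | Sum.inl u, Sum.inl v => A.G.Adj u v
  | Sum.inr u, Sum.inr v => B.G.Adj u v
  | _, _ => False

lemma sumAdj_symm (A B : LGraph k) : ∀ x y, sumAdj A B x y → sumAdj A B y x := by
  rintro (u | u) (v | v) h
  · exact A.G.adj_symm h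
  · exact h.elim
  · exact h.elim
  · exact B.G.adj_symm h

/-- The gluing relation: vertices carrying the same label get identified. -/
def glue (A B : LGraph k) : A.V ⊕ B.V → A.V ⊕ B.V → Prop := fun x y =>
  ∃ i : Fin k, (A.ν i).map Sum.inl = some x ∧ (B.ν i).map Sum.inr = some y

/-- The product of two `k`-labelled graphs: disjoint union, identify equally labelled
vertices, suppress loops and parallel edges. -/
def product (A B : LGraph k) : LGraph k where
  V := Quot (glue A B)
  fin := by
    haveI := A.fin
    haveI := B.fin
    exact Finite.of_surjective (Quot.mk _) (fun x => Quot.inductionOn x fun a => ⟨a, rfl⟩)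
  G :=
    { Adj := fun x y =>
        x ≠ y ∧ ∃ u v, Quot.mk _ u = x ∧ Quot.mk _ v = y ∧ sumAdj A B u v
      symm := by
        refine ⟨?_⟩
        rintro x y ⟨hne, u, v, hu, hv, h⟩
        exact ⟨hne.symm, v, u, hv, hu, sumAdj_symm A B u v h⟩
      loopless := ⟨fun x h => h.1 rfl⟩ }
  ν := fun i =>
    ((A.ν i).map fun v => Quot.mk _ (Sum.inl v)).orElse
      fun _ => (B.ν i).map fun v => Quot.mk _ (Sum.inr v)

/-- Isomorphism of labelled graphs. -/
def LIso (A B : LGraph k) : Prop :=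
  ∃ e : A.G ≃g B.G, ∀ i, (A.ν i).map (fun v => e v) = B.ν i

end LGraph

/-- `k`-construction trees: leaves carry (fully labelled) graphs, unary nodes remove
one label, binary nodes take products. -/
inductive CT (k : ℕ) : Type 1
  | leaf : LGraph k → CT k
  | elim : Fin k → CT k → CT k
  | prod : CT k → CT k → CT k

namespace CT

variable {k : ℕ}

/-- The labelled graph constructed by a construction tree. -/
def graphOf : CT k → LGraph k
  | leaf A => A
  | elim i t => (graphOf t).removeLabel i
  | prod t₁ t₂ => (graphOf t₁).product (graphOf t₂)

/-- Validity: leaves are fully labelled and elimination nodes remove an assigned label. -/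
def Valid : CT k → Prop
  | leaf A => A.FullyLabelled
  | elim i t => Valid t ∧ (graphOf t).ν i ≠ none
  | prod t₁ t₂ => Valid t₁ ∧ Valid t₂

/-- Guarded validity: labels may only be removed from vertices with a labelled neighbour. -/
def GuardedValid : CT k → Prop
  | leaf A => A.FullyLabelled
  | elim i t => GuardedValid t ∧
      ∃ v, (graphOf t).ν i = some v ∧
        ∃ j w, (graphOf t).ν j = some w ∧ (graphOf t).G.Adj v w
  | prod t₁ t₂ => GuardedValid t₁ ∧ GuardedValid t₂

/-- The elimination depth: maximal number of elimination nodes on a root-to-leaf path. -/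
def elimDepth : CT k → ℕ
  | leaf _ => 0
  | elim _ t => elimDepth t + 1
  | prod t₁ t₂ => max (elimDepth t₁) (elimDepth t₂)

end CT

/-- The class `L^k_q` of `k`-labelled graphs admitting a `k`-construction tree of
elimination depth at most `q`. -/
def Lclass (k q : ℕ) : Set (LGraph k) :=
  {F | ∃ t : CT k, CT.Valid t ∧ CT.elimDepth t ≤ q ∧ LGraph.LIso (CT.graphOf t) F}

/-- The class `GL^k_q`: as `L^k_q`, but labels may only be removed from vertices with a
labelled neighbour. -/
def GLclass (k q : ℕ) : Set (LGraph k) :=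
  {F | ∃ t : CT k, CT.GuardedValid t ∧ CT.elimDepth t ≤ q ∧ LGraph.LIso (CT.graphOf t) F}

/-- The class `GE^k_q` of unlabelled graphs underlying graphs in `GL^k_q`. -/
def GEclass (k q : ℕ) : Set GraphB :=
  {G | ∃ F ∈ GLclass k q, Nonempty (F.G ≃g G.2)}

/-! ## The bijective pebble game -/

/-- `γ` is a partial isomorphism between `G` and `H`. -/
def PartialIso {V W : Type*} (G : SimpleGraph V) (H : SimpleGraph W) {k : ℕ}
    (γ : Fin k → Option (V × W)) : Prop :=
  ∀ i j vi wi vj wj, γ i = some (vi, wi) → γ j = some (vj, wj) →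
    ((vi = vj ↔ wi = wj) ∧ (G.Adj vi vj ↔ H.Adj wi wj))

/-- Duplicator wins the `q`-round bijective `k`-pebble game on `G` and `H` from position `γ`. -/
def DupWins {V W : Type*} (G : SimpleGraph V) (H : SimpleGraph W) (k : ℕ) :
    ℕ → (Fin k → Option (V × W)) → Prop
  | 0, γ => PartialIso G H γ
  | q + 1, γ => PartialIso G H γ ∧
      ∀ p : Fin k, ∃ f : V ≃ W, ∀ v : V,
        DupWins G H k q (fun j => if j = p then some (v, f v) else γ j)



namespace GCproof

open CForm

variable {k : ℕ}

/-- falsum -/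
def fls (v0 : Fin k) : CForm (Fin k) := .and (.eq v0 v0) (.not (.eq v0 v0))

def tru (v0 : Fin k) : CForm (Fin k) := .not (fls v0)

@[simp] lemma sat_fls {W : Type*} (G : SimpleGraph W) (v0 : Fin k) (a : Fin k → Option W) :
    ¬ Sat G (fls v0) a := by
  rintro ⟨h1, h2⟩; exact h2 h1

@[simp] lemma sat_tru {W : Type*} (G : SimpleGraph W) (v0 : Fin k) (a : Fin k → Option W) :
    Sat G (tru v0) a := sat_fls G v0 a

@[simp] lemma guarded_fls (v0 : Fin k) : Guarded (fls v0) := ⟨trivial, trivial⟩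
@[simp] lemma guarded_tru (v0 : Fin k) : Guarded (tru v0) := guarded_fls v0
@[simp] lemma qr_fls (v0 : Fin k) : qr (fls v0) = 0 := rfl
@[simp] lemma qr_tru (v0 : Fin k) : qr (tru v0) = 0 := rfl

def bigAnd (v0 : Fin k) : List (CForm (Fin k)) → CForm (Fin k)
  | [] => tru v0
  | φ :: l => .and φ (bigAnd v0 l)

def bigOr (v0 : Fin k) : List (CForm (Fin k)) → CForm (Fin k)
  | [] => fls v0
  | φ :: l => .or φ (bigOr v0 l)

lemma sat_bigAnd {W : Type*} (G : SimpleGraph W) (v0 : Fin k) (a : Fin k → Option W) :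
    ∀ l : List (CForm (Fin k)), (Sat G (bigAnd v0 l) a ↔ ∀ φ ∈ l, Sat G φ a)
  | [] => by simp [bigAnd]
  | φ :: l => by
      simp only [bigAnd, List.mem_cons]
      constructor
      · rintro ⟨h1, h2⟩ ψ (rfl | hm)
        · exact h1
        · exact (sat_bigAnd G v0 a l).1 h2 ψ hm
      · intro h
        exact ⟨h φ (Or.inl rfl), (sat_bigAnd G v0 a l).2 fun ψ hm => h ψ (Or.inr hm)⟩

lemma sat_bigOr {W : Type*} (G : SimpleGraph W) (v0 : Fin k) (a : Fin k → Option W) :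
    ∀ l : List (CForm (Fin k)), (Sat G (bigOr v0 l) a ↔ ∃ φ ∈ l, Sat G φ a)
  | [] => by simp [bigOr]
  | φ :: l => by
      simp only [bigOr, List.mem_cons]
      constructor
      · rintro (h1 | h2)
        · exact ⟨φ, Or.inl rfl, h1⟩
        · obtain ⟨ψ, hm, hs⟩ := (sat_bigOr G v0 a l).1 h2
          exact ⟨ψ, Or.inr hm, hs⟩
      · rintro ⟨ψ, (rfl | hm), hs⟩
        · exact Or.inl hs
        · exact Or.inr ((sat_bigOr G v0 a l).2 ⟨ψ, hm, hs⟩)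

lemma guarded_bigAnd (v0 : Fin k) :
    ∀ l : List (CForm (Fin k)), (∀ φ ∈ l, Guarded φ) → Guarded (bigAnd v0 l)
  | [] => fun _ => guarded_tru v0
  | φ :: l => fun h =>
      ⟨h φ (List.mem_cons_self), guarded_bigAnd v0 l fun ψ hm => h ψ (List.mem_cons_of_mem _ hm)⟩

lemma guarded_bigOr (v0 : Fin k) :
    ∀ l : List (CForm (Fin k)), (∀ φ ∈ l, Guarded φ) → Guarded (bigOr v0 l)
  | [] => fun _ => guarded_fls v0
  | φ :: l => fun h =>
      ⟨h φ (List.mem_cons_self), guarded_bigOr v0 l fun ψ hm => h ψ (List.mem_cons_of_mem _ hm)⟩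

lemma qr_bigAnd (v0 : Fin k) (n : ℕ) :
    ∀ l : List (CForm (Fin k)), (∀ φ ∈ l, qr φ ≤ n) → qr (bigAnd v0 l) ≤ n
  | [] => fun _ => by simp [bigAnd]
  | φ :: l => fun h => by
      simp only [bigAnd, qr, max_le_iff]
      exact ⟨h φ (List.mem_cons_self), qr_bigAnd v0 n l fun ψ hm => h ψ (List.mem_cons_of_mem _ hm)⟩

lemma qr_bigOr (v0 : Fin k) (n : ℕ) :
    ∀ l : List (CForm (Fin k)), (∀ φ ∈ l, qr φ ≤ n) → qr (bigOr v0 l) ≤ n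
  | [] => fun _ => by simp [bigOr, qr_fls]
  | φ :: l => fun h => by
      simp only [bigOr, qr, max_le_iff]
      exact ⟨h φ (List.mem_cons_self), qr_bigOr v0 n l fun ψ hm => h ψ (List.mem_cons_of_mem _ hm)⟩

/-- counting semantics -/
lemma sat_count {W : Type*} [Finite W] (G : SimpleGraph W) (t : ℕ) (i : Fin k)
    (χ : CForm (Fin k)) (a : Fin k → Option W) :
    Sat G (.count t i χ) a ↔
      t ≤ Nat.card {w : W | Sat G χ (fun j => if j = i then some w else a j)} := by
  constructor
  · rintro ⟨s, hts, hall⟩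
    refine le_trans hts ?_
    rw [Nat.card_coe_set_eq]
    calc (s.card : ℕ) = (↑s : Set W).ncard := (Set.ncard_coe_finset s).symm
      _ ≤ _ := Set.ncard_le_ncard (fun w hw => hall w hw) (Set.toFinite _)
  · intro h
    refine ⟨(Set.toFinite {w : W | Sat G χ (fun j => if j = i then some w else a j)}).toFinset, ?_, ?_⟩
    · rw [Nat.card_coe_set_eq] at h
      rwa [← Set.ncard_eq_toFinset_card _ (Set.toFinite _)]
    · intro w hw
      simpa using (Set.Finite.mem_toFinset _).1 hw

end GCproof


namespace GCproof

variable {k : ℕ}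

def CoveredP {V₀ : Type*} (ν₀ : Fin k → Option V₀) (D : Set (Fin k × Fin k)) (u v : V₀) : Prop :=
  ∃ p ∈ D, (ν₀ p.1 = some u ∧ ν₀ p.2 = some v) ∨ (ν₀ p.1 = some v ∧ ν₀ p.2 = some u)

noncomputable def homD {V₀ W : Type*} (G₀ : SimpleGraph V₀) (ν₀ : Fin k → Option V₀)
    (D : Set (Fin k × Fin k)) (G : SimpleGraph W) (b : Fin k → Option W) : ℕ :=
  Nat.card {f : V₀ → W //
    (∀ u v, G₀.Adj u v → ¬ CoveredP ν₀ D u v → G.Adj (f u) (f v)) ∧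
    ∀ i u, ν₀ i = some u → b i = some (f u)}

lemma homD_eq_of {V₀ W : Type*} (G₀ : SimpleGraph V₀) (ν₁ ν₂ : Fin k → Option V₀)
    (D₁ D₂ : Set (Fin k × Fin k)) (G : SimpleGraph W) (b₁ b₂ : Fin k → Option W)
    (h1 : ∀ u v, G₀.Adj u v → (CoveredP ν₁ D₁ u v ↔ CoveredP ν₂ D₂ u v))
    (h2 : ∀ f : V₀ → W, (∀ i u, ν₁ i = some u → b₁ i = some (f u)) ↔
      (∀ i u, ν₂ i = some u → b₂ i = some (f u))) :
    homD G₀ ν₁ D₁ G b₁ = homD G₀ ν₂ D₂ G b₂ := by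
  apply Nat.card_congr
  apply Equiv.subtypeEquivRight
  intro f
  constructor
  · rintro ⟨ha, hb⟩
    exact ⟨fun u v huv hc => ha u v huv (fun c => hc ((h1 u v huv).1 c)), (h2 f).1 hb⟩
  · rintro ⟨ha, hb⟩
    exact ⟨fun u v huv hc => ha u v huv (fun c => hc ((h1 u v huv).2 c)), (h2 f).2 hb⟩

lemma homD_congr_b {V₀ W : Type*} (G₀ : SimpleGraph V₀) (ν₀ : Fin k → Option V₀)
    (D : Set (Fin k × Fin k)) (G : SimpleGraph W) (b₁ b₂ : Fin k → Option W)
    (h : ∀ i u, ν₀ i = some u → b₁ i = b₂ i) :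
    homD G₀ ν₀ D G b₁ = homD G₀ ν₀ D G b₂ := by
  apply homD_eq_of _ _ _ _ _ _ _ _ (fun _ _ _ => Iff.rfl)
  intro f
  constructor
  · intro hb i u hi; rw [← h i u hi]; exact hb i u hi
  · intro hb i u hi; rw [h i u hi]; exact hb i u hi

/-- Cover transfer for label removal. -/
lemma covered_removeLabel {V₀ : Type*} (ν₀ : Fin k → Option V₀) (l : Fin k)
    (D : Set (Fin k × Fin k)) (u v : V₀) :
    CoveredP (fun j => if j = l then none else ν₀ j) D u v ↔
      CoveredP ν₀ {p ∈ D | p.1 ≠ l ∧ p.2 ≠ l} u v := by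
  constructor
  · rintro ⟨p, hp, h⟩
    have h1 : p.1 ≠ l := by rcases h with ⟨h, -⟩ | ⟨h, -⟩ <;> · intro e; rw [e] at h; simp at h
    have h2 : p.2 ≠ l := by rcases h with ⟨-, h⟩ | ⟨-, h⟩ <;> · intro e; rw [e] at h; simp at h
    refine ⟨p, ⟨hp, h1, h2⟩, ?_⟩
    simpa [h1, h2] using h
  · rintro ⟨p, ⟨hp, h1, h2⟩, h⟩
    exact ⟨p, hp, by simpa [h1, h2] using h⟩

/-- Decomposition of the hom count at an elimination node. -/
lemma homD_removeLabel_sum {V₀ W : Type*} [Finite V₀] [Fintype W] (G₀ : SimpleGraph V₀)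
    (ν₀ : Fin k → Option V₀) (l : Fin k) (x : V₀) (hx : ν₀ l = some x)
    (D : Set (Fin k × Fin k)) (G : SimpleGraph W) (b : Fin k → Option W) :
    homD G₀ (fun j => if j = l then none else ν₀ j) D G b =
      ∑ w : W, homD G₀ ν₀ {p ∈ D | p.1 ≠ l ∧ p.2 ≠ l} G (fun i => if i = l then some w else b i) := by
  classical
  set νr : Fin k → Option V₀ := fun j => if j = l then none else ν₀ j with hνr
  set D' : Set (Fin k × Fin k) := {p ∈ D | p.1 ≠ l ∧ p.2 ≠ l} with hD'
  set P : (V₀ → W) → Prop := fun f =>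
    (∀ u v, G₀.Adj u v → ¬ CoveredP νr D u v → G.Adj (f u) (f v)) ∧
    ∀ i u, νr i = some u → b i = some (f u) with hP
  set Pw : W → (V₀ → W) → Prop := fun w f =>
    (∀ u v, G₀.Adj u v → ¬ CoveredP ν₀ D' u v → G.Adj (f u) (f v)) ∧
    ∀ i u, ν₀ i = some u → (if i = l then some w else b i) = some (f u) with hPw
  have e : {f // P f} ≃ Σ w : W, {f // Pw w f} := by
    refine
      { toFun := fun f => ⟨f.1 x, f.1, ?_, ?_⟩
        invFun := fun p => ⟨p.2.1, ?_, ?_⟩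
        left_inv := ?_
        right_inv := ?_ }
    · intro u v huv hc
      exact f.2.1 u v huv (fun c => hc ((covered_removeLabel ν₀ l D u v).1 c))
    · intro i u hi
      by_cases hil : i = l
      · subst hil
        rw [hx] at hi
        cases hi
        simp
      · simp only [hil, if_false]
        exact f.2.2 i u (by simp [hνr, hil, hi])
    · intro u v huv hc
      exact p.2.2.1 u v huv (fun c => hc ((covered_removeLabel ν₀ l D u v).2 c))
    · intro i u hi
      simp only [hνr] at hi
      by_cases hil : i = l
      · rw [hil] at hi; simp at hi
      · simp only [hil, if_false] at hi
        have := p.2.2.2 i u hi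
        simpa [hil] using this
    · intro f; apply Subtype.ext; rfl
    · rintro ⟨w, f, hf⟩
      have hw : f x = w := by
        have := hf.2 l x hx
        simp only [if_pos rfl] at this
        exact (Option.some.inj this).symm
      subst hw
      rfl
  haveI : Fintype {f // P f} := Fintype.ofFinite _
  haveI : ∀ w : W, Fintype {f // Pw w f} := fun w => Fintype.ofFinite _
  rw [show homD G₀ νr D G b = Nat.card {f // P f} from rfl]
  rw [Nat.card_eq_fintype_card, Fintype.card_congr e, Fintype.card_sigma]
  refine Finset.sum_congr rfl ?_
  intro w _
  rw [show homD G₀ ν₀ D' G (fun i => if i = l then some w else b i) = Nat.card {f // Pw w f} from rfl]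
  rw [Nat.card_eq_fintype_card]

lemma natcard_setOf {W : Type*} [Fintype W] (P : W → Prop) [DecidablePred P] :
    Nat.card {w | P w} = (Finset.univ.filter P).card := by
  rw [Nat.card_eq_fintype_card]
  exact Fintype.card_subtype _

lemma natcard_zero_iff {W : Type*} [Finite W] (P : W → Prop) :
    Nat.card {w | P w} = 0 ↔ ∀ w, ¬ P w := by
  rw [Nat.card_eq_zero]
  constructor
  · rintro (h | h)
    · intro w hw; exact h.elim' ⟨w, hw⟩
    · exact absurd (Finite.of_injective (fun p : {w | P w} => p.1) Subtype.val_injective) h.not_finite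
  · intro h
    left
    exact ⟨fun w => h w.1 w.2⟩

end GCproof


namespace GCproof

def conv {M : ℕ} (c : Fin (M+1) → Fin (M+1)) : ℕ → ℕ :=
  fun j => if h : j < M + 1 then (c ⟨j, h⟩ : ℕ) else 0

noncomputable def funsL (M : ℕ) : List (ℕ → ℕ) :=
  ((Finset.univ : Finset (Fin (M+1) → Fin (M+1))).filter
    (fun c => ∑ j ∈ Finset.Icc 1 M, j * conv c j = M)).toList.map conv

lemma sum_repr {W : Type*} [Fintype W] (n : W → ℕ) (Q : W → Prop)
    (hn : ∀ w, n w ≠ 0 → Q w) (M : ℕ) :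
    (∑ w, n w = M) ↔ ∃ c ∈ funsL M,
      (∀ j ∈ Finset.range M, Nat.card {w | Q w ∧ n w = j + 1} = c (j + 1)) ∧
      Nat.card {w | Q w ∧ ∀ j ∈ Finset.range (M+1), n w ≠ j} = 0 := by
  classical
  have hNc : ∀ j, Nat.card {w | Q w ∧ n w = j}
      = (Finset.univ.filter (fun w => Q w ∧ n w = j)).card := fun j => natcard_setOf _
  have key : (∀ w, n w ≤ M) → ∑ w, n w
      = ∑ j ∈ Finset.Icc 1 M, j * Nat.card {w | Q w ∧ n w = j} := by
    intro hle
    have h1 : ∑ w, n w = ∑ w ∈ Finset.univ.filter (fun w => n w ≠ 0), n w :=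
      (Finset.sum_filter_ne_zero _).symm
    have h2 : ∀ w ∈ Finset.univ.filter (fun w => n w ≠ 0), n w ∈ Finset.Icc 1 M := by
      intro w hw
      simp only [Finset.mem_filter, Finset.mem_univ, true_and] at hw
      simp only [Finset.mem_Icc]
      exact ⟨by omega, hle w⟩
    rw [h1, ← Finset.sum_fiberwise_of_maps_to h2]
    refine Finset.sum_congr rfl ?_
    intro j hj
    simp only [Finset.mem_Icc] at hj
    have hset : (Finset.univ.filter (fun w => n w ≠ 0)).filter (fun w => n w = j)
        = Finset.univ.filter (fun w => Q w ∧ n w = j) := by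
      ext w
      simp only [Finset.mem_filter, Finset.mem_univ, true_and]
      constructor
      · rintro ⟨h0, hj'⟩; exact ⟨hn w h0, hj'⟩
      · rintro ⟨hq, hj'⟩; refine ⟨?_, hj'⟩; omega
    have hcongr : ∀ w ∈ (Finset.univ.filter (fun w => n w ≠ 0)).filter (fun w => n w = j),
        n w = j := by intro w hw; simp only [Finset.mem_filter] at hw; exact hw.2
    rw [Finset.sum_congr rfl hcongr, Finset.sum_const, hset, hNc j, smul_eq_mul, mul_comm]
  constructor
  · intro h
    have hle : ∀ w, n w ≤ M := by
      intro w
      rw [← h]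
      exact Finset.single_le_sum (fun _ _ => Nat.zero_le _) (Finset.mem_univ w)
    have hNle : ∀ j, 1 ≤ j → j ≤ M → Nat.card {w | Q w ∧ n w = j} ≤ M := by
      intro j hj1 hjM
      have h1 : j * Nat.card {w | Q w ∧ n w = j}
          ≤ ∑ j' ∈ Finset.Icc 1 M, j' * Nat.card {w | Q w ∧ n w = j'} :=
        Finset.single_le_sum (f := fun j' => j' * Nat.card {w | Q w ∧ n w = j'})
          (fun _ _ => Nat.zero_le _) (by simp only [Finset.mem_Icc]; omega)
      rw [← key hle, h] at h1
      calc Nat.card {w | Q w ∧ n w = j} ≤ j * Nat.card {w | Q w ∧ n w = j} :=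
            Nat.le_mul_of_pos_left _ (by omega)
        _ ≤ M := h1
    set chat : Fin (M+1) → Fin (M+1) := fun j =>
      if h0 : (j : ℕ) = 0 then 0 else ⟨min (Nat.card {w | Q w ∧ n w = (j : ℕ)}) M, by omega⟩
      with hchat
    have hconv : ∀ j, 1 ≤ j → j ≤ M → conv chat j = Nat.card {w | Q w ∧ n w = j} := by
      intro j hj1 hjM
      have hjlt : j < M + 1 := by omega
      simp only [conv, dif_pos hjlt, hchat]
      rw [dif_neg (show ¬((⟨j, hjlt⟩ : Fin (M+1)) : ℕ) = 0 by simp; omega)]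
      exact min_eq_left (hNle j hj1 hjM)
    refine ⟨conv chat, ?_, ?_, ?_⟩
    · simp only [funsL, List.mem_map]
      refine ⟨chat, ?_, rfl⟩
      rw [Finset.mem_toList, Finset.mem_filter]
      refine ⟨Finset.mem_univ _, ?_⟩
      rw [Finset.sum_congr rfl (fun j hj => by
        simp only [Finset.mem_Icc] at hj
        rw [hconv j hj.1 hj.2])]
      rw [← key hle, h]
    · intro j hj
      simp only [Finset.mem_range] at hj
      exact (hconv (j+1) (by omega) (by omega)).symm
    · rw [natcard_zero_iff]
      rintro w ⟨-, hw⟩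
      exact hw (n w) (by simp only [Finset.mem_range]; exact Nat.lt_succ_of_le (hle w)) rfl
  · rintro ⟨c, hc, hcj, hzero⟩
    rw [natcard_zero_iff] at hzero
    have hle : ∀ w, n w ≤ M := by
      intro w
      by_contra hlt
      refine hzero w ⟨hn w (by omega), ?_⟩
      intro j hj
      simp only [Finset.mem_range] at hj
      omega
    rw [key hle]
    simp only [funsL, List.mem_map] at hc
    obtain ⟨c', hc', rfl⟩ := hc
    rw [Finset.mem_toList, Finset.mem_filter] at hc'
    refine Eq.trans ?_ hc'.2
    refine Finset.sum_congr rfl ?_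
    intro j hj
    simp only [Finset.mem_Icc] at hj
    have h := hcj (j - 1) (by simp only [Finset.mem_range]; omega)
    have hj1 : j - 1 + 1 = j := by omega
    rw [hj1] at h
    rw [h]

end GCproof


namespace GCproof

open LGraph

variable {k : ℕ} (A B : LGraph k)

/-- labelled vertices of the sum -/
def Lab (z : A.V ⊕ B.V) : Prop :=
  (∃ i u, z = Sum.inl u ∧ A.ν i = some u) ∨ (∃ i w, z = Sum.inr w ∧ B.ν i = some w)

lemma pnu_of_A {i : Fin k} {u : A.V} (h : A.ν i = some u) :
    (A.product B).ν i = some (Quot.mk (glue A B) (Sum.inl u)) := by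
  simp [LGraph.product, h, Option.orElse]

lemma pnu_of_B {i : Fin k} {w : B.V} (hA : A.ν i = none) (h : B.ν i = some w) :
    (A.product B).ν i = some (Quot.mk (glue A B) (Sum.inr w)) := by
  simp [LGraph.product, hA, h, Option.orElse]

lemma pnu_isSome {i : Fin k} :
    ((A.product B).ν i).isSome ↔ (A.ν i).isSome ∨ (B.ν i).isSome := by
  cases hA : A.ν i with
  | some u => simp only [pnu_of_A A B hA, hA]; simp; rfl
  | none =>
    cases hB : B.ν i with
    | some w => simp only [pnu_of_B A B hA hB, hB]; simp; rfl
    | none => simp [LGraph.product, hA, hB, Option.orElse]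

lemma eqvGen_lab {z z' : A.V ⊕ B.V} (h : Relation.EqvGen (glue A B) z z') :
    z = z' ∨ (Lab A B z ∧ Lab A B z') := by
  induction h with
  | rel x y hxy =>
    obtain ⟨i, h1, h2⟩ := hxy
    cases hA : A.ν i with
    | none => rw [hA] at h1; simp at h1
    | some u =>
      rw [hA] at h1
      simp only [Option.map_some] at h1
      cases hB : B.ν i with
      | none => rw [hB] at h2; simp at h2
      | some w =>
        rw [hB] at h2
        simp only [Option.map_some] at h2
        obtain rfl : x = Sum.inl u := (Option.some.inj h1).symm
        obtain rfl : y = Sum.inr w := (Option.some.inj h2).symm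
        right
        exact ⟨Or.inl ⟨i, u, rfl, hA⟩, Or.inr ⟨i, w, rfl, hB⟩⟩
  | refl x => exact Or.inl rfl
  | symm x y _ ih =>
    rcases ih with h | ⟨h1, h2⟩
    · exact Or.inl h.symm
    · exact Or.inr ⟨h2, h1⟩
  | trans x y z _ _ ih1 ih2 =>
    rcases ih1 with h | ⟨h1, h2⟩
    · rw [h]; exact ih2
    · rcases ih2 with h' | ⟨h3, h4⟩
      · rw [← h']; exact Or.inr ⟨h1, h2⟩
      · exact Or.inr ⟨h1, h4⟩

lemma eqvGen_const {W : Type*} {b : Fin k → Option W} {gA : A.V → W} {gB : B.V → W}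
    (hA : ∀ i u, A.ν i = some u → b i = some (gA u))
    (hB : ∀ i w, B.ν i = some w → b i = some (gB w))
    {z z' : A.V ⊕ B.V} (h : Relation.EqvGen (glue A B) z z') :
    Sum.elim gA gB z = Sum.elim gA gB z' := by
  induction h with
  | rel x y hxy =>
    obtain ⟨i, h1, h2⟩ := hxy
    cases hAi : A.ν i with
    | none => rw [hAi] at h1; simp at h1
    | some u =>
      rw [hAi] at h1
      cases hBi : B.ν i with
      | none => rw [hBi] at h2; simp at h2
      | some w =>
        rw [hBi] at h2
        simp only [Option.map_some] at h1 h2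
        obtain rfl : x = Sum.inl u := (Option.some.inj h1).symm
        obtain rfl : y = Sum.inr w := (Option.some.inj h2).symm
        simp only [Sum.elim_inl, Sum.elim_inr]
        have e1 := hA i u hAi
        have e2 := hB i w hBi
        rw [e1] at e2
        exact Option.some.inj e2
  | refl x => rfl
  | symm _ _ _ ih => exact ih.symm
  | trans _ _ _ _ _ ih1 ih2 => exact ih1.trans ih2

lemma lab_of_A {u : A.V} (h : Lab A B (Sum.inl u)) : ∃ i, A.ν i = some u := by
  rcases h with ⟨i, u', h1, h2⟩ | ⟨i, w, h1, h2⟩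
  · exact ⟨i, by rwa [← Sum.inl.inj h1] at h2⟩
  · simp at h1

lemma lab_of_B {w : B.V} (h : Lab A B (Sum.inr w)) : ∃ i, B.ν i = some w := by
  rcases h with ⟨i, u', h1, h2⟩ | ⟨i, w', h1, h2⟩
  · simp at h1
  · exact ⟨i, by rwa [← Sum.inr.inj h1] at h2⟩

lemma find_label_A {j : Fin k} {u : A.V}
    (h : (A.product B).ν j = some (Quot.mk (glue A B) (Sum.inl u))) :
    ∃ i, A.ν i = some u ∧ (A.product B).ν i = (A.product B).ν j := by
  cases hA : A.ν j with
  | some u' =>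
    have h' := pnu_of_A A B hA
    rw [h'] at h
    have heq : Quot.mk (glue A B) (Sum.inl u') = Quot.mk (glue A B) (Sum.inl u) :=
      Option.some.inj h
    rcases eqvGen_lab A B (Quot.eq.1 heq) with he | ⟨h1, h2⟩
    · exact ⟨j, by rwa [Sum.inl.inj he] at hA, rfl⟩
    · obtain ⟨i, hi⟩ := lab_of_A A B h2
      refine ⟨i, hi, ?_⟩
      rw [pnu_of_A A B hi, h', heq]
  | none =>
    cases hB : B.ν j with
    | none =>
      rw [show (A.product B).ν j = none by simp [LGraph.product, hA, hB, Option.orElse]] at h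
      simp at h
    | some w =>
      have h' := pnu_of_B A B hA hB
      rw [h'] at h
      have heq : Quot.mk (glue A B) (Sum.inr w) = Quot.mk (glue A B) (Sum.inl u) :=
        Option.some.inj h
      rcases eqvGen_lab A B (Quot.eq.1 heq) with he | ⟨h1, h2⟩
      · simp at he
      · obtain ⟨i, hi⟩ := lab_of_A A B h2
        refine ⟨i, hi, ?_⟩
        rw [pnu_of_A A B hi, h', heq]

lemma find_label_B {j : Fin k} {w : B.V}
    (h : (A.product B).ν j = some (Quot.mk (glue A B) (Sum.inr w))) :
    ∃ i, B.ν i = some w ∧ (A.product B).ν i = (A.product B).ν j := by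
  -- first find *some* label of w, then fix up
  have hlab : ∃ i, B.ν i = some w := by
    cases hA : A.ν j with
    | some u' =>
      have h' := pnu_of_A A B hA
      rw [h'] at h
      have heq : Quot.mk (glue A B) (Sum.inl u') = Quot.mk (glue A B) (Sum.inr w) :=
        Option.some.inj h
      rcases eqvGen_lab A B (Quot.eq.1 heq) with he | ⟨h1, h2⟩
      · simp at he
      · exact lab_of_B A B h2
    | none =>
      cases hB : B.ν j with
      | none =>
        rw [show (A.product B).ν j = none by simp [LGraph.product, hA, hB, Option.orElse]] at h
        simp at h
      | some w' =>
        have h' := pnu_of_B A B hA hB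
        rw [h'] at h
        have heq : Quot.mk (glue A B) (Sum.inr w') = Quot.mk (glue A B) (Sum.inr w) :=
          Option.some.inj h
        rcases eqvGen_lab A B (Quot.eq.1 heq) with he | ⟨h1, h2⟩
        · exact ⟨j, by rwa [Sum.inr.inj he] at hB⟩
        · exact lab_of_B A B h2
  obtain ⟨i, hi⟩ := hlab
  refine ⟨i, hi, ?_⟩
  -- pν i = some (mk (inr w)) regardless of whether A.ν i is defined
  have hpi : (A.product B).ν i = some (Quot.mk (glue A B) (Sum.inr w)) := by
    cases hAi : A.ν i with
    | none => exact pnu_of_B A B hAi hi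
    | some u₀ =>
      rw [pnu_of_A A B hAi]
      congr 1
      exact Quot.sound ⟨i, by simp [hAi], by simp [hi]⟩
  rw [hpi, h]

end GCproof

namespace GCproof2

open LGraph GCproof

variable {k : ℕ} (A B : LGraph k)

/-- `pν i = some (mk (inr w))` whenever `B.ν i = some w`, even if `A.ν i` is defined. -/
lemma pnu_of_B' {i : Fin k} {w : B.V} (h : B.ν i = some w) :
    (A.product B).ν i = some (Quot.mk (glue A B) (Sum.inr w)) := by
  cases hAi : A.ν i with
  | none => exact pnu_of_B A B hAi h
  | some u₀ =>
    rw [pnu_of_A A B hAi]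
    congr 1
    exact Quot.sound ⟨i, by simp [hAi], by simp [h]⟩

def DA (D : Set (Fin k × Fin k)) : Set (Fin k × Fin k) :=
  {q | (∃ u, A.ν q.1 = some u) ∧ (∃ v, A.ν q.2 = some v) ∧
    ((∃ p ∈ D,
        ((A.product B).ν p.1 = (A.product B).ν q.1 ∧ (A.product B).ν p.2 = (A.product B).ν q.2) ∨
        ((A.product B).ν p.1 = (A.product B).ν q.2 ∧ (A.product B).ν p.2 = (A.product B).ν q.1)) ∨
      (A.ν q.1 ≠ A.ν q.2 ∧ (A.product B).ν q.1 = (A.product B).ν q.2))}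

def DB (D : Set (Fin k × Fin k)) : Set (Fin k × Fin k) :=
  {q | (∃ u, B.ν q.1 = some u) ∧ (∃ v, B.ν q.2 = some v) ∧
    ((∃ p ∈ D,
        ((A.product B).ν p.1 = (A.product B).ν q.1 ∧ (A.product B).ν p.2 = (A.product B).ν q.2) ∨
        ((A.product B).ν p.1 = (A.product B).ν q.2 ∧ (A.product B).ν p.2 = (A.product B).ν q.1)) ∨
      (B.ν q.1 ≠ B.ν q.2 ∧ (A.product B).ν q.1 = (A.product B).ν q.2))}

lemma coveredA_iff (D : Set (Fin k × Fin k)) (u v : A.V) (hne : u ≠ v) :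
    CoveredP A.ν (DA A B D) u v ↔
      (Quot.mk (glue A B) (Sum.inl u) = Quot.mk (glue A B) (Sum.inl v) ∨
       CoveredP (A.product B).ν D (Quot.mk (glue A B) (Sum.inl u)) (Quot.mk (glue A B) (Sum.inl v))) := by
  constructor
  · rintro ⟨q, ⟨⟨u₁, hu₁⟩, ⟨v₁, hv₁⟩, hcase⟩, hor⟩
    rcases hcase with ⟨p, hp, hpor⟩ | ⟨hne', hpeq⟩
    · right
      rcases hor with ⟨h1, h2⟩ | ⟨h1, h2⟩
      · have e1 := pnu_of_A A B h1
        have e2 := pnu_of_A A B h2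
        rcases hpor with ⟨f1, f2⟩ | ⟨f1, f2⟩
        · exact ⟨p, hp, Or.inl ⟨f1.trans e1, f2.trans e2⟩⟩
        · exact ⟨p, hp, Or.inr ⟨f1.trans e2, f2.trans e1⟩⟩
      · have e1 := pnu_of_A A B h1
        have e2 := pnu_of_A A B h2
        rcases hpor with ⟨f1, f2⟩ | ⟨f1, f2⟩
        · exact ⟨p, hp, Or.inr ⟨f1.trans e1, f2.trans e2⟩⟩
        · exact ⟨p, hp, Or.inl ⟨f1.trans e2, f2.trans e1⟩⟩
    · left
      rcases hor with ⟨h1, h2⟩ | ⟨h1, h2⟩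
      · have e1 := pnu_of_A A B h1
        have e2 := pnu_of_A A B h2
        rw [e1, e2] at hpeq
        exact Option.some.inj hpeq
      · have e1 := pnu_of_A A B h1
        have e2 := pnu_of_A A B h2
        rw [e1, e2] at hpeq
        exact (Option.some.inj hpeq).symm
  · rintro (hcol | ⟨p, hp, hor⟩)
    · rcases eqvGen_lab A B (Quot.eq.1 hcol) with he | ⟨h1, h2⟩
      · exact absurd (Sum.inl.inj he) hne
      · obtain ⟨i, hi⟩ := lab_of_A A B h1
        obtain ⟨j, hj⟩ := lab_of_A A B h2
        refine ⟨(i, j), ⟨⟨u, hi⟩, ⟨v, hj⟩, Or.inr ⟨?_, ?_⟩⟩, Or.inl ⟨hi, hj⟩⟩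
        · rw [hi, hj]
          intro h
          exact hne (Option.some.inj h)
        · rw [pnu_of_A A B hi, pnu_of_A A B hj, hcol]
    · rcases hor with ⟨e1, e2⟩ | ⟨e1, e2⟩
      · obtain ⟨i, hi, hpi⟩ := find_label_A A B e1
        obtain ⟨j, hj, hpj⟩ := find_label_A A B e2
        exact ⟨(i, j), ⟨⟨u, hi⟩, ⟨v, hj⟩, Or.inl ⟨p, hp, Or.inl ⟨hpi.symm, hpj.symm⟩⟩⟩,
          Or.inl ⟨hi, hj⟩⟩
      · obtain ⟨i, hi, hpi⟩ := find_label_A A B e1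
        obtain ⟨j, hj, hpj⟩ := find_label_A A B e2
        exact ⟨(i, j), ⟨⟨v, hi⟩, ⟨u, hj⟩, Or.inl ⟨p, hp, Or.inl ⟨hpi.symm, hpj.symm⟩⟩⟩,
          Or.inr ⟨hi, hj⟩⟩

lemma coveredB_iff (D : Set (Fin k × Fin k)) (u v : B.V) (hne : u ≠ v) :
    CoveredP B.ν (DB A B D) u v ↔
      (Quot.mk (glue A B) (Sum.inr u) = Quot.mk (glue A B) (Sum.inr v) ∨
       CoveredP (A.product B).ν D (Quot.mk (glue A B) (Sum.inr u)) (Quot.mk (glue A B) (Sum.inr v))) := by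
  constructor
  · rintro ⟨q, ⟨⟨u₁, hu₁⟩, ⟨v₁, hv₁⟩, hcase⟩, hor⟩
    rcases hcase with ⟨p, hp, hpor⟩ | ⟨hne', hpeq⟩
    · right
      rcases hor with ⟨h1, h2⟩ | ⟨h1, h2⟩
      · have e1 := pnu_of_B' A B h1
        have e2 := pnu_of_B' A B h2
        rcases hpor with ⟨f1, f2⟩ | ⟨f1, f2⟩
        · exact ⟨p, hp, Or.inl ⟨f1.trans e1, f2.trans e2⟩⟩
        · exact ⟨p, hp, Or.inr ⟨f1.trans e2, f2.trans e1⟩⟩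
      · have e1 := pnu_of_B' A B h1
        have e2 := pnu_of_B' A B h2
        rcases hpor with ⟨f1, f2⟩ | ⟨f1, f2⟩
        · exact ⟨p, hp, Or.inr ⟨f1.trans e1, f2.trans e2⟩⟩
        · exact ⟨p, hp, Or.inl ⟨f1.trans e2, f2.trans e1⟩⟩
    · left
      rcases hor with ⟨h1, h2⟩ | ⟨h1, h2⟩
      · have e1 := pnu_of_B' A B h1
        have e2 := pnu_of_B' A B h2
        rw [e1, e2] at hpeq
        exact Option.some.inj hpeq
      · have e1 := pnu_of_B' A B h1
        have e2 := pnu_of_B' A B h2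
        rw [e1, e2] at hpeq
        exact (Option.some.inj hpeq).symm
  · rintro (hcol | ⟨p, hp, hor⟩)
    · rcases eqvGen_lab A B (Quot.eq.1 hcol) with he | ⟨h1, h2⟩
      · exact absurd (Sum.inr.inj he) hne
      · obtain ⟨i, hi⟩ := lab_of_B A B h1
        obtain ⟨j, hj⟩ := lab_of_B A B h2
        refine ⟨(i, j), ⟨⟨u, hi⟩, ⟨v, hj⟩, Or.inr ⟨?_, ?_⟩⟩, Or.inl ⟨hi, hj⟩⟩
        · rw [hi, hj]
          intro h
          exact hne (Option.some.inj h)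
        · rw [pnu_of_B' A B hi, pnu_of_B' A B hj, hcol]
    · rcases hor with ⟨e1, e2⟩ | ⟨e1, e2⟩
      · obtain ⟨i, hi, hpi⟩ := find_label_B A B e1
        obtain ⟨j, hj, hpj⟩ := find_label_B A B e2
        exact ⟨(i, j), ⟨⟨u, hi⟩, ⟨v, hj⟩, Or.inl ⟨p, hp, Or.inl ⟨hpi.symm, hpj.symm⟩⟩⟩,
          Or.inl ⟨hi, hj⟩⟩
      · obtain ⟨i, hi, hpi⟩ := find_label_B A B e1
        obtain ⟨j, hj, hpj⟩ := find_label_B A B e2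
        exact ⟨(i, j), ⟨⟨v, hi⟩, ⟨u, hj⟩, Or.inl ⟨p, hp, Or.inl ⟨hpi.symm, hpj.symm⟩⟩⟩,
          Or.inr ⟨hi, hj⟩⟩

end GCproof2

namespace GCproof2

variable {k : ℕ}

open LGraph GCproof

lemma homD_product (A B : LGraph k) (D : Set (Fin k × Fin k)) {W : Type*}
    (G : SimpleGraph W) (b : Fin k → Option W) :
    homD (A.product B).G (A.product B).ν D G b
      = homD A.G A.ν (DA A B D) G b * homD B.G B.ν (DB A B D) G b := by
  classical
  set mk : A.V ⊕ B.V → (A.product B).V := Quot.mk (glue A B) with hmk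
  have e : {f : (A.product B).V → W //
      (∀ x y, (A.product B).G.Adj x y → ¬ CoveredP (A.product B).ν D x y → G.Adj (f x) (f y)) ∧
      ∀ i x, (A.product B).ν i = some x → b i = some (f x)} ≃
    ({f : A.V → W //
      (∀ u v, A.G.Adj u v → ¬ CoveredP A.ν (DA A B D) u v → G.Adj (f u) (f v)) ∧
      ∀ i u, A.ν i = some u → b i = some (f u)} ×
     {f : B.V → W //
      (∀ u v, B.G.Adj u v → ¬ CoveredP B.ν (DB A B D) u v → G.Adj (f u) (f v)) ∧
      ∀ i u, B.ν i = some u → b i = some (f u)}) := by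
    refine
      { toFun := fun f => ⟨⟨fun u => f.1 (mk (Sum.inl u)), ?_, ?_⟩,
          ⟨fun w => f.1 (mk (Sum.inr w)), ?_, ?_⟩⟩
        invFun := fun p => ⟨Quot.lift (Sum.elim p.1.1 p.2.1) ?_, ?_, ?_⟩
        left_inv := ?_
        right_inv := ?_ }
    · -- adjacency for the A-component
      intro u v huv hnc
      rw [coveredA_iff A B D u v huv.ne] at hnc
      push_neg at hnc
      refine f.2.1 (mk (Sum.inl u)) (mk (Sum.inl v)) ⟨hnc.1, Sum.inl u, Sum.inl v, rfl, rfl, huv⟩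
        hnc.2
    · -- labels for the A-component
      intro i u hi
      exact f.2.2 i (mk (Sum.inl u)) (pnu_of_A A B hi)
    · -- adjacency for the B-component
      intro u v huv hnc
      rw [coveredB_iff A B D u v huv.ne] at hnc
      push_neg at hnc
      refine f.2.1 (mk (Sum.inr u)) (mk (Sum.inr v)) ⟨hnc.1, Sum.inr u, Sum.inr v, rfl, rfl, huv⟩
        hnc.2
    · -- labels for the B-component
      intro i w hi
      exact f.2.2 i (mk (Sum.inr w)) (pnu_of_B' A B hi)
    · -- respect for Quot.lift
      intro z z' hzz'
      exact eqvGen_const A B p.1.2.2 p.2.2.2 (Relation.EqvGen.rel z z' hzz')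
    · -- adjacency for the combined map
      rintro x y ⟨hne, z, z', hz, hz', hs⟩ hncov
      subst hz hz'
      cases z with
      | inl u =>
        cases z' with
        | inl v =>
          have hs' : A.G.Adj u v := hs
          have hnc : ¬ CoveredP A.ν (DA A B D) u v := by
            rw [coveredA_iff A B D u v hs'.ne]
            rintro (hcol | hcov)
            · exact hne hcol
            · exact hncov hcov
          exact p.1.2.1 u v hs' hnc
        | inr w => exact (hs : False).elim
      | inr w =>
        cases z' with
        | inl v => exact (hs : False).elim
        | inr w' =>
          have hs' : B.G.Adj w w' := hs
          have hnc : ¬ CoveredP B.ν (DB A B D) w w' := by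
            rw [coveredB_iff A B D w w' hs'.ne]
            rintro (hcol | hcov)
            · exact hne hcol
            · exact hncov hcov
          exact p.2.2.1 w w' hs' hnc
    · -- labels for the combined map
      intro i x hi
      cases hAi : A.ν i with
      | some u =>
        rw [pnu_of_A A B hAi] at hi
        rw [← Option.some.inj hi]
        exact p.1.2.2 i u hAi
      | none =>
        cases hBi : B.ν i with
        | none =>
          rw [show (A.product B).ν i = none by
            simp [LGraph.product, hAi, hBi, Option.orElse]] at hi
          simp at hi
        | some w =>
          rw [pnu_of_B A B hAi hBi] at hi
          rw [← Option.some.inj hi]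
          exact p.2.2.2 i w hBi
    · intro f
      apply Subtype.ext
      funext x
      induction x using Quot.ind with
      | _ z => cases z <;> rfl
    · intro p
      rfl
  refine Eq.trans (Nat.card_congr e) ?_
  exact Nat.card_prod _ _

end GCproof2


namespace GCproof

open LGraph CT GCproof2

variable {k : ℕ}

lemma sat_guard_count {W : Type*} [Finite W] (G : SimpleGraph W) (r : ℕ) (gv p : Fin k)
    (hne : gv ≠ p) (v₀ : W) (a : Fin k → Option W) (ha : a gv = some v₀) (ψ : CForm (Fin k)) :
    CForm.Sat G (.count r p (.and (.adj gv p) ψ)) a ↔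
      r ≤ Nat.card {w : W | G.Adj v₀ w ∧ CForm.Sat G ψ (fun j => if j = p then some w else a j)} := by
  rw [sat_count]
  have hset : {w : W | CForm.Sat G (.and (.adj gv p) ψ) (fun j => if j = p then some w else a j)}
      = {w : W | G.Adj v₀ w ∧ CForm.Sat G ψ (fun j => if j = p then some w else a j)} := by
    ext w
    simp only [Set.mem_setOf_eq]
    constructor
    · rintro ⟨⟨v, u, hv, hu, hadj⟩, hψ⟩
      simp only [if_neg hne, ha] at hv
      simp only [if_pos rfl] at hu
      cases hv; cases hu
      exact ⟨hadj, hψ⟩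
    · rintro ⟨hadj, hψ⟩
      exact ⟨⟨v₀, w, by simp [hne, ha], by simp, hadj⟩, hψ⟩
  rw [hset]

/-- The leaf case. -/
lemma leaf_case (hk : 1 ≤ k) (A : LGraph k) (hFL : A.FullyLabelled)
    (D : Set (Fin k × Fin k)) (ρ : Fin k → Fin k) (m : ℕ) :
    ∃ φ : CForm (Fin k), CForm.Guarded φ ∧ CForm.qr φ ≤ 0 ∧
      ∀ (W : Type) (G : SimpleGraph W), Finite W → ∀ (a : Fin k → Option W),
        (∀ i, (A.ν i).isSome → (a (ρ i)).isSome) →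
        (homD A.G A.ν D G (fun i => a (ρ i)) = m ↔ CForm.Sat G φ a) := by
  classical
  set v0 : Fin k := ⟨0, hk⟩ with hv0
  set L1 : List (Fin k × Fin k) := (Finset.univ.filter
    (fun q : Fin k × Fin k => A.ν q.1 ≠ none ∧ A.ν q.1 = A.ν q.2)).toList with hL1
  set L2 : List (Fin k × Fin k) := (Finset.univ.filter
    (fun q : Fin k × Fin k =>
      ∃ u v, A.ν q.1 = some u ∧ A.ν q.2 = some v ∧ A.G.Adj u v ∧ ¬ CoveredP A.ν D u v)).toList
    with hL2
  set φ₁ : CForm (Fin k) := bigAnd v0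
    (L1.map (fun q => .eq (ρ q.1) (ρ q.2)) ++ L2.map (fun q => .adj (ρ q.1) (ρ q.2))) with hφ₁
  have hG1 : CForm.Guarded φ₁ := by
    apply guarded_bigAnd
    intro ψ hψ
    rcases List.mem_append.1 hψ with h | h <;>
      · obtain ⟨q, -, rfl⟩ := List.mem_map.1 h
        trivial
  have hq1 : CForm.qr φ₁ ≤ 0 := by
    apply qr_bigAnd
    intro ψ hψ
    rcases List.mem_append.1 hψ with h | h <;>
      · obtain ⟨q, -, rfl⟩ := List.mem_map.1 h
        exact le_refl 0
  have main1 : ∀ (W : Type) (G : SimpleGraph W) (a : Fin k → Option W),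
      (∀ i, (A.ν i).isSome → (a (ρ i)).isSome) →
      ((homD A.G A.ν D G (fun i => a (ρ i)) = 1 ↔ CForm.Sat G φ₁ a) ∧
        homD A.G A.ν D G (fun i => a (ρ i)) ≤ 1) := by
    intro W G a hyp
    set S := {f : A.V → W //
      (∀ u v, A.G.Adj u v → ¬ CoveredP A.ν D u v → G.Adj (f u) (f v)) ∧
      ∀ i u, A.ν i = some u → a (ρ i) = some (f u)} with hS
    have hsub : Subsingleton S := by
      constructor
      rintro ⟨f, hf⟩ ⟨g, hg⟩
      apply Subtype.ext
      funext u
      obtain ⟨i, hi⟩ := hFL u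
      have h1 := hf.2 i u hi
      have h2 := hg.2 i u hi
      rw [h1] at h2
      exact Option.some.inj h2
    have hcard : homD A.G A.ν D G (fun i => a (ρ i)) = Nat.card S := rfl
    constructor
    · constructor
      · intro h1
        have hne : Nonempty S := by
          rcases Nat.card_eq_one_iff_unique.1 (hcard ▸ h1) with ⟨-, h⟩
          exact h
        obtain ⟨f, hf⟩ := hne
        rw [hφ₁, sat_bigAnd]
        intro ψ hψ
        rcases List.mem_append.1 hψ with h | h
        · obtain ⟨q, hq, rfl⟩ := List.mem_map.1 h
          rw [hL1, Finset.mem_toList, Finset.mem_filter] at hq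
          obtain ⟨-, hne1, heq⟩ := hq
          obtain ⟨u, hu⟩ := Option.ne_none_iff_exists'.1 hne1
          have hu2 : A.ν q.2 = some u := by rw [← heq]; exact hu
          exact ⟨f u, hf.2 q.1 u hu, hf.2 q.2 u hu2⟩
        · obtain ⟨q, hq, rfl⟩ := List.mem_map.1 h
          rw [hL2, Finset.mem_toList, Finset.mem_filter] at hq
          obtain ⟨-, u, v, hu, hv, hadj, hnc⟩ := hq
          exact ⟨f u, f v, hf.2 q.1 u hu, hf.2 q.2 v hv, hf.1 u v hadj hnc⟩
      · intro hsat
        rw [hφ₁, sat_bigAnd] at hsat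
        have hch : ∀ u : A.V, ∃ i, A.ν i = some u := hFL
        have hsome : ∀ u : A.V, (a (ρ (hch u).choose)).isSome := fun u =>
          hyp _ (by rw [(hch u).choose_spec]; rfl)
        set f : A.V → W := fun u => (a (ρ (hch u).choose)).get (hsome u) with hfdef
        have hfval : ∀ u, a (ρ (hch u).choose) = some (f u) := fun u =>
          (Option.some_get (hsome u)).symm
        have hmem : (∀ u v, A.G.Adj u v → ¬ CoveredP A.ν D u v → G.Adj (f u) (f v)) ∧
            ∀ i u, A.ν i = some u → a (ρ i) = some (f u) := by
          constructor
          · intro u v hadj hnc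
            have hsat2 := hsat (.adj (ρ (hch u).choose) (ρ (hch v).choose))
              (List.mem_append.2 (Or.inr (List.mem_map.2 ⟨((hch u).choose, (hch v).choose),
                by
                  rw [hL2, Finset.mem_toList, Finset.mem_filter]
                  exact ⟨Finset.mem_univ _, u, v, (hch u).choose_spec, (hch v).choose_spec,
                    hadj, hnc⟩, rfl⟩)))
            obtain ⟨xx, yy, hxx, hyy, hGadj⟩ := hsat2
            rw [hfval u] at hxx
            rw [hfval v] at hyy
            rw [← Option.some.inj hxx, ← Option.some.inj hyy] at hGadj
            exact hGadj
          · intro i u hi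
            have hsat2 := hsat (.eq (ρ i) (ρ (hch u).choose))
              (List.mem_append.2 (Or.inl (List.mem_map.2 ⟨(i, (hch u).choose),
                by
                  rw [hL1, Finset.mem_toList, Finset.mem_filter]
                  refine ⟨Finset.mem_univ _, by rw [hi]; simp, ?_⟩
                  rw [hi, (hch u).choose_spec], rfl⟩)))
            obtain ⟨v, hv1, hv2⟩ := hsat2
            rw [hfval u] at hv2
            rw [hv1, Option.some.inj hv2]
        rw [hcard]
        rw [Nat.card_eq_one_iff_unique]
        exact ⟨hsub, ⟨⟨f, hmem⟩⟩⟩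
    · rw [hcard]
      haveI := hsub
      rcases isEmpty_or_nonempty S with hE | hN
      · haveI := hE
        simp [Nat.card_of_isEmpty]
      · obtain ⟨s⟩ := hN
        rw [Nat.card_of_subsingleton s]
  rcases Nat.lt_or_ge m 2 with hm | hm
  · interval_cases m
    · refine ⟨.not φ₁, hG1, hq1, ?_⟩
      intro W G hW a hyp
      have h := main1 W G a hyp
      have : CForm.Sat G (.not φ₁) a ↔ ¬ CForm.Sat G φ₁ a := Iff.rfl
      rw [this, ← h.1]
      omega
    · exact ⟨φ₁, hG1, hq1, fun W G hW a hyp => (main1 W G a hyp).1⟩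
  · refine ⟨fls v0, guarded_fls v0, le_of_eq (qr_fls v0), ?_⟩
    intro W G hW a hyp
    have h := main1 W G a hyp
    constructor
    · intro he; omega
    · intro hs; exact absurd hs (sat_fls G v0 a)

end GCproof

namespace GCproof

open LGraph CT GCproof2

variable {k : ℕ}

def cntF (p gv : Fin k) (r : ℕ) (ψ : CForm (Fin k)) : CForm (Fin k) :=
  CForm.count r p (.and (.adj gv p) ψ)

def EcntF (p gv : Fin k) (r : ℕ) (ψ : CForm (Fin k)) : CForm (Fin k) :=
  .and (cntF p gv r ψ) (.not (cntF p gv (r+1) ψ))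

lemma qr_cntF (p gv : Fin k) (r : ℕ) (ψ : CForm (Fin k)) :
    CForm.qr (cntF p gv r ψ) = CForm.qr ψ + 1 := by
  show max (CForm.qr (.adj gv p)) (CForm.qr ψ) + 1 = CForm.qr ψ + 1
  show max 0 (CForm.qr ψ) + 1 = CForm.qr ψ + 1
  rw [Nat.max_comm, Nat.max_zero]

lemma qr_EcntF (p gv : Fin k) (r : ℕ) (ψ : CForm (Fin k)) :
    CForm.qr (EcntF p gv r ψ) = CForm.qr ψ + 1 := by
  show max (CForm.qr (cntF p gv r ψ)) (CForm.qr (cntF p gv (r+1) ψ)) = CForm.qr ψ + 1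
  rw [qr_cntF, qr_cntF, Nat.max_self]

lemma guarded_cntF (p gv : Fin k) (hne : gv ≠ p) (r : ℕ) (ψ : CForm (Fin k))
    (hψ : CForm.Guarded ψ) : CForm.Guarded (cntF p gv r ψ) :=
  ⟨rfl, hne, hψ⟩

lemma guarded_EcntF (p gv : Fin k) (hne : gv ≠ p) (r : ℕ) (ψ : CForm (Fin k))
    (hψ : CForm.Guarded ψ) : CForm.Guarded (EcntF p gv r ψ) :=
  ⟨guarded_cntF p gv hne r ψ hψ, guarded_cntF p gv hne (r+1) ψ hψ⟩

/-- The elimination case of the main induction, for an abstract labelled graph `A`. -/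
lemma elim_case (hk : 1 ≤ k) (A : LGraph k) (l : Fin k) (x y : A.V) (mg : Fin k)
    (hx : A.ν l = some x) (hy : A.ν mg = some y) (hxy : A.G.Adj x y) (ed : ℕ)
    (ih : ∀ (D : Set (Fin k × Fin k)) (ρ : Fin k → Fin k) (m : ℕ),
      ∃ φ : CForm (Fin k), CForm.Guarded φ ∧ CForm.qr φ ≤ ed ∧
        ∀ (W : Type) (G : SimpleGraph W), Finite W → ∀ (a : Fin k → Option W),
          (∀ i, (A.ν i).isSome → (a (ρ i)).isSome) →
          (homD A.G A.ν D G (fun i => a (ρ i)) = m ↔ CForm.Sat G φ a))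
    (D : Set (Fin k × Fin k)) (ρ : Fin k → Fin k) (m : ℕ) :
    ∃ φ : CForm (Fin k), CForm.Guarded φ ∧ CForm.qr φ ≤ ed + 1 ∧
      ∀ (W : Type) (G : SimpleGraph W), Finite W → ∀ (a : Fin k → Option W),
        (∀ i, ((fun j => if j = l then none else A.ν j) i).isSome → (a (ρ i)).isSome) →
        (homD A.G (fun j => if j = l then none else A.ν j) D G (fun i => a (ρ i)) = m ↔
          CForm.Sat G φ a) := by
  classical
  set D' : Set (Fin k × Fin k) := {q ∈ D | q.1 ≠ l ∧ q.2 ≠ l} with hD'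
  by_cases hdup : ∃ m', m' ≠ l ∧ A.ν m' = A.ν l
  · -- the vertex x carries another label m'
    obtain ⟨m', hm'ne, hm'⟩ := hdup
    obtain ⟨φ, hG, hq, hsat⟩ := ih D' (fun i => ρ (if i = l then m' else i)) m
    refine ⟨φ, hG, le_trans hq (Nat.le_succ _), ?_⟩
    intro W G hW a hyp
    have hyp' : ∀ i, (A.ν i).isSome → (a ((fun i => ρ (if i = l then m' else i)) i)).isSome := by
      intro i hi
      by_cases hil : i = l
      · simp only [if_pos hil]
        apply hyp m'
        simp only [if_neg hm'ne]
        rw [hm', ← hil]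
        exact hi
      · simp only [if_neg hil]
        apply hyp i
        simp only [if_neg hil]
        exact hi
    rw [← hsat W G hW a hyp']
    have key : homD A.G (fun j => if j = l then none else A.ν j) D G (fun i => a (ρ i))
        = homD A.G A.ν D' G (fun i => a ((fun i => ρ (if i = l then m' else i)) i)) := by
      apply homD_eq_of
      · intro u v _
        exact covered_removeLabel A.ν l D u v
      · intro f
        constructor
        · intro hb i u hi
          by_cases hil : i = l
          · simp only [if_pos hil]
            apply hb m' u
            rw [if_neg hm'ne, hm', ← hil]
            exact hi
          · simp only [if_neg hil]
            apply hb i u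
            rw [if_neg hil]
            exact hi
        · intro hb i u hi
          by_cases hil : i = l
          · rw [hil, if_pos rfl] at hi
            simp at hi
          · rw [if_neg hil] at hi
            have := hb i u hi
            simpa only [if_neg hil] using this
    rw [key]
  · -- x carries only the label l
    push_neg at hdup
    have honly : ∀ i, A.ν i = some x → i = l := by
      intro i hi
      by_contra hne
      exact hdup i hne (by rw [hi, hx])
    set Lfin : Finset (Fin k) := Finset.univ.filter (fun i => (A.ν i).isSome ∧ i ≠ l)
      with hLfin
    have himg : (Lfin.image ρ).card < k := by
      have h1 : Lfin ⊆ Finset.univ.erase l := by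
        intro i hi
        rw [hLfin, Finset.mem_filter] at hi
        exact Finset.mem_erase.2 ⟨hi.2.2, Finset.mem_univ i⟩
      calc (Lfin.image ρ).card ≤ Lfin.card := Finset.card_image_le
        _ ≤ (Finset.univ.erase l).card := Finset.card_le_card h1
        _ = k - 1 := by rw [Finset.card_erase_of_mem (Finset.mem_univ l)]; simp
        _ < k := by omega
    obtain ⟨p, hp⟩ : ∃ p : Fin k, p ∉ Lfin.image ρ := by
      by_contra h
      push_neg at h
      have h2 : (Finset.univ : Finset (Fin k)).card ≤ (Lfin.image ρ).card :=
        Finset.card_le_card (fun z _ => h z)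
      rw [Finset.card_univ, Fintype.card_fin] at h2
      omega
    have hmgl : mg ≠ l := by
      intro e
      rw [e, hx] at hy
      exact hxy.ne (Option.some.inj hy.symm).symm
    have hmgLfin : mg ∈ Lfin := by
      rw [hLfin, Finset.mem_filter]
      exact ⟨Finset.mem_univ _, by rw [hy]; rfl, hmgl⟩
    have hgvp : ρ mg ≠ p := by
      intro e
      exact hp (e ▸ Finset.mem_image_of_mem ρ hmgLfin)
    have hρnep : ∀ i, (A.ν i).isSome → i ≠ l → ρ i ≠ p := by
      intro i hi hil e
      exact hp (e ▸ Finset.mem_image_of_mem ρ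
        (by rw [hLfin, Finset.mem_filter]; exact ⟨Finset.mem_univ _, hi, hil⟩))
    obtain ⟨φf, hGf, hqf, hSf⟩ :
        ∃ φf : ℕ → CForm (Fin k), (∀ j, CForm.Guarded (φf j)) ∧
          (∀ j, CForm.qr (φf j) ≤ ed) ∧
          ∀ (j : ℕ) (W : Type) (G : SimpleGraph W), Finite W → ∀ (a : Fin k → Option W),
            (∀ i, (A.ν i).isSome → (a ((fun i => if i = l then p else ρ i) i)).isSome) →
            (homD A.G A.ν D' G (fun i => a ((fun i' => if i' = l then p else ρ i') i)) = j ↔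
              CForm.Sat G (φf j) a) := by
      choose φf hGf hqf hSf using fun j : ℕ => ih D' (fun i => if i = l then p else ρ i) j
      exact ⟨φf, hGf, hqf, hSf⟩
    set v0 : Fin k := ⟨0, hk⟩ with hv0
    set gv := ρ mg with hgv
    refine ⟨bigOr v0 ((funsL m).map (fun c =>
      CForm.and (bigAnd v0 ((List.range m).map (fun j => EcntF p gv (c (j+1)) (φf (j+1)))))
        (.not (cntF p gv 1 (bigAnd v0 ((List.range (m+1)).map (fun j => .not (φf j)))))))),
      ?_, ?_, ?_⟩
    · -- guardedness
      apply guarded_bigOr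
      intro ψ hψ
      obtain ⟨c, -, rfl⟩ := List.mem_map.1 hψ
      have hB1 : CForm.Guarded
          (bigAnd v0 ((List.range m).map (fun j => EcntF p gv (c (j+1)) (φf (j+1))))) := by
        apply guarded_bigAnd
        intro χ hχ
        obtain ⟨j, -, rfl⟩ := List.mem_map.1 hχ
        exact guarded_EcntF p gv hgvp _ _ (hGf (j+1))
      have hB2 : CForm.Guarded
          (cntF p gv 1 (bigAnd v0 ((List.range (m+1)).map (fun j => .not (φf j))))) := by
        apply guarded_cntF p gv hgvp
        apply guarded_bigAnd
        intro χ hχ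
        obtain ⟨j, -, rfl⟩ := List.mem_map.1 hχ
        exact hGf j
      exact ⟨hB1, hB2⟩
    · -- quantifier rank
      apply qr_bigOr
      intro ψ hψ
      obtain ⟨c, -, rfl⟩ := List.mem_map.1 hψ
      show max _ _ ≤ ed + 1
      rw [max_le_iff]
      constructor
      · apply qr_bigAnd
        intro χ hχ
        obtain ⟨j, -, rfl⟩ := List.mem_map.1 hχ
        rw [qr_EcntF]
        have := hqf (j+1)
        omega
      · show CForm.qr (cntF p gv 1 _) ≤ ed + 1
        rw [qr_cntF]
        have : CForm.qr (bigAnd v0 ((List.range (m+1)).map (fun j => .not (φf j)))) ≤ ed := by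
          apply qr_bigAnd
          intro χ hχ
          obtain ⟨j, -, rfl⟩ := List.mem_map.1 hχ
          exact hqf j
        omega
    · -- correctness
      intro W G hW a hyp
      haveI := hW
      letI : Fintype W := Fintype.ofFinite W
      haveI : Finite A.V := A.fin
      have hys : ((fun j => if j = l then none else A.ν j) mg).isSome := by
        simp only [if_neg hmgl]
        rw [hy]
        rfl
      obtain ⟨w₀, hw₀⟩ : ∃ w₀, a gv = some w₀ := Option.isSome_iff_exists.1 (hyp mg hys)
      -- Step 1 : sum decomposition
      have step1 : homD A.G (fun j => if j = l then none else A.ν j) D G (fun i => a (ρ i))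
          = ∑ w : W, homD A.G A.ν D' G (fun i => if i = l then some w else a (ρ i)) :=
        homD_removeLabel_sum A.G A.ν l x hx D G (fun i => a (ρ i))
      -- Step 2 : child formulas compute the local counts
      have step2 : ∀ (w : W) (j : ℕ),
          (homD A.G A.ν D' G (fun i => if i = l then some w else a (ρ i)) = j ↔
            CForm.Sat G (φf j) (fun i' => if i' = p then some w else a i')) := by
        intro w j
        have hyp' : ∀ i, (A.ν i).isSome →
            (((fun i' => if i' = p then some w else a i')
              ((fun i'' => if i'' = l then p else ρ i'') i))).isSome := by
          intro i hi
          by_cases hil : i = l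
          · simp [hil]
          · simp only [if_neg hil]
            rw [if_neg (hρnep i hi hil)]
            apply hyp i
            simp only [if_neg hil]
            exact hi
        rw [← hSf j W G hW (fun i' => if i' = p then some w else a i') hyp']
        have hb : homD A.G A.ν D' G (fun i => if i = l then some w else a (ρ i))
            = homD A.G A.ν D' G (fun i => (fun i' => if i' = p then some w else a i')
                ((fun i'' => if i'' = l then p else ρ i'') i)) := by
          apply homD_congr_b
          intro i u hi
          by_cases hil : i = l
          · simp [hil]
          · simp only [if_neg hil]
            rw [if_neg (hρnep i (by rw [hi]; rfl) hil)]
        rw [hb]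
      -- Step 3 : only neighbours of w₀ matter
      have step3 : ∀ w : W,
          homD A.G A.ν D' G (fun i => if i = l then some w else a (ρ i)) ≠ 0 →
          G.Adj w₀ w := by
        intro w hnw
        have hne : Nonempty {f : A.V → W //
            (∀ u v, A.G.Adj u v → ¬ CoveredP A.ν D' u v → G.Adj (f u) (f v)) ∧
            ∀ i u, A.ν i = some u →
              (fun i => if i = l then some w else a (ρ i)) i = some (f u)} :=
          (Nat.card_ne_zero.1 hnw).1
        obtain ⟨f, hf⟩ := hne
        have hfx : f x = w := by
          have := hf.2 l x hx
          simp only [if_pos rfl] at this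
          exact (Option.some.inj this).symm
        have hfy : f y = w₀ := by
          have := hf.2 mg y hy
          simp only [if_neg hmgl] at this
          rw [hgv] at hw₀
          rw [hw₀] at this
          exact (Option.some.inj this).symm
        have hnc : ¬ CoveredP A.ν D' x y := by
          rintro ⟨q, ⟨hqD, hq1, hq2⟩, hor⟩
          rcases hor with ⟨h1, -⟩ | ⟨-, h2⟩
          · exact hq1 (honly q.1 h1)
          · exact hq2 (honly q.2 h2)
        have := hf.1 x y hxy hnc
        rw [hfx, hfy] at this
        exact this.symm
      -- Step 4 : conclude
      rw [step1,
        sum_repr (fun w => homD A.G A.ν D' G (fun i => if i = l then some w else a (ρ i)))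
          (fun w => G.Adj w₀ w) step3 m, sat_bigOr]
      have hbody : ∀ c : ℕ → ℕ, (CForm.Sat G
          (CForm.and (bigAnd v0 ((List.range m).map (fun j => EcntF p gv (c (j+1)) (φf (j+1)))))
            (.not (cntF p gv 1 (bigAnd v0 ((List.range (m+1)).map (fun j => .not (φf j))))))) a ↔
          ((∀ j ∈ Finset.range m, Nat.card {w : W | G.Adj w₀ w ∧
              homD A.G A.ν D' G (fun i => if i = l then some w else a (ρ i)) = j + 1} = c (j + 1)) ∧
           Nat.card {w : W | G.Adj w₀ w ∧ ∀ j ∈ Finset.range (m+1),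
              homD A.G A.ν D' G (fun i => if i = l then some w else a (ρ i)) ≠ j} = 0)) := by
        intro c
        show (CForm.Sat G
            (bigAnd v0 ((List.range m).map (fun j => EcntF p gv (c (j+1)) (φf (j+1))))) a ∧
            ¬ CForm.Sat G
              (cntF p gv 1 (bigAnd v0 ((List.range (m+1)).map (fun j => .not (φf j))))) a) ↔ _
        rw [sat_bigAnd]
        have hEcount : ∀ (r j : ℕ), (CForm.Sat G (EcntF p gv r (φf j)) a ↔
            Nat.card {w : W | G.Adj w₀ w ∧
              homD A.G A.ν D' G (fun i => if i = l then some w else a (ρ i)) = j} = r) := by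
          intro r j
          have h1 := sat_guard_count G r gv p hgvp w₀ a hw₀ (φf j)
          have h2 := sat_guard_count G (r+1) gv p hgvp w₀ a hw₀ (φf j)
          have hset : {w : W | G.Adj w₀ w ∧
                CForm.Sat G (φf j) (fun i' => if i' = p then some w else a i')}
              = {w : W | G.Adj w₀ w ∧
                homD A.G A.ν D' G (fun i => if i = l then some w else a (ρ i)) = j} := by
            ext w
            simp only [Set.mem_setOf_eq]
            rw [← step2 w j]
          rw [hset] at h1 h2
          show (CForm.Sat G (cntF p gv r (φf j)) a ∧
            ¬ CForm.Sat G (cntF p gv (r+1) (φf j)) a) ↔ _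
          rw [show CForm.Sat G (cntF p gv r (φf j)) a ↔ _ from h1,
            show CForm.Sat G (cntF p gv (r+1) (φf j)) a ↔ _ from h2]
          omega
        have hzero : (¬ CForm.Sat G
            (cntF p gv 1 (bigAnd v0 ((List.range (m+1)).map (fun j => .not (φf j))))) a) ↔
            Nat.card {w : W | G.Adj w₀ w ∧ ∀ j ∈ Finset.range (m+1),
              homD A.G A.ν D' G (fun i => if i = l then some w else a (ρ i)) ≠ j} = 0 := by
          have h1 := sat_guard_count G 1 gv p hgvp w₀ a hw₀
            (bigAnd v0 ((List.range (m+1)).map (fun j => .not (φf j))))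
          have hset : {w : W | G.Adj w₀ w ∧ CForm.Sat G
                (bigAnd v0 ((List.range (m+1)).map (fun j => .not (φf j))))
                (fun i' => if i' = p then some w else a i')}
              = {w : W | G.Adj w₀ w ∧ ∀ j ∈ Finset.range (m+1),
                homD A.G A.ν D' G (fun i => if i = l then some w else a (ρ i)) ≠ j} := by
            ext w
            simp only [Set.mem_setOf_eq]
            rw [sat_bigAnd]
            constructor
            · rintro ⟨hadj, hall⟩
              refine ⟨hadj, ?_⟩
              intro j hj hnj
              exact hall (.not (φf j)) (List.mem_map.2 ⟨j,
                List.mem_range.2 (Finset.mem_range.1 hj), rfl⟩) ((step2 w j).1 hnj)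
            · rintro ⟨hadj, hall⟩
              refine ⟨hadj, ?_⟩
              intro ψ hψ
              obtain ⟨j, hj, rfl⟩ := List.mem_map.1 hψ
              intro hsatj
              exact hall j (Finset.mem_range.2 (List.mem_range.1 hj)) ((step2 w j).2 hsatj)
          rw [show CForm.Sat G (cntF p gv 1 _) a ↔ _ from h1, hset]
          omega
        rw [hzero]
        constructor
        · rintro ⟨hall, hz⟩
          refine ⟨?_, hz⟩
          intro j hj
          exact (hEcount (c (j+1)) (j+1)).1 (hall _ (List.mem_map.2 ⟨j,
            List.mem_range.2 (Finset.mem_range.1 hj), rfl⟩))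
        · rintro ⟨hall, hz⟩
          refine ⟨?_, hz⟩
          intro ψ hψ
          obtain ⟨j, hj, rfl⟩ := List.mem_map.1 hψ
          exact (hEcount (c (j+1)) (j+1)).2
            (hall j (Finset.mem_range.2 (List.mem_range.1 hj)))
      constructor
      · rintro ⟨c, hc, hcond⟩
        exact ⟨_, List.mem_map.2 ⟨c, hc, rfl⟩, (hbody c).2 hcond⟩
      · rintro ⟨ψ, hψ, hsatψ⟩
        obtain ⟨c, hc, rfl⟩ := List.mem_map.1 hψ
        exact ⟨c, hc, (hbody c).1 hsatψ⟩

end GCproof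

namespace GCproof

open LGraph CT GCproof2

variable {k : ℕ}

lemma prod_case (hk : 1 ≤ k) (A B : LGraph k) (ed1 ed2 : ℕ)
    (ih1 : ∀ (D : Set (Fin k × Fin k)) (ρ : Fin k → Fin k) (m : ℕ),
      ∃ φ : CForm (Fin k), CForm.Guarded φ ∧ CForm.qr φ ≤ ed1 ∧
        ∀ (W : Type) (G : SimpleGraph W), Finite W → ∀ (a : Fin k → Option W),
          (∀ i, (A.ν i).isSome → (a (ρ i)).isSome) →
          (homD A.G A.ν D G (fun i => a (ρ i)) = m ↔ CForm.Sat G φ a))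
    (ih2 : ∀ (D : Set (Fin k × Fin k)) (ρ : Fin k → Fin k) (m : ℕ),
      ∃ φ : CForm (Fin k), CForm.Guarded φ ∧ CForm.qr φ ≤ ed2 ∧
        ∀ (W : Type) (G : SimpleGraph W), Finite W → ∀ (a : Fin k → Option W),
          (∀ i, (B.ν i).isSome → (a (ρ i)).isSome) →
          (homD B.G B.ν D G (fun i => a (ρ i)) = m ↔ CForm.Sat G φ a))
    (D : Set (Fin k × Fin k)) (ρ : Fin k → Fin k) (m : ℕ) :
    ∃ φ : CForm (Fin k), CForm.Guarded φ ∧ CForm.qr φ ≤ max ed1 ed2 ∧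
      ∀ (W : Type) (G : SimpleGraph W), Finite W → ∀ (a : Fin k → Option W),
        (∀ i, ((A.product B).ν i).isSome → (a (ρ i)).isSome) →
        (homD (A.product B).G (A.product B).ν D G (fun i => a (ρ i)) = m ↔
          CForm.Sat G φ a) := by
  classical
  set v0 : Fin k := ⟨0, hk⟩ with hv0
  obtain ⟨φA, hGA, hqA, hSA⟩ :
      ∃ φA : ℕ → CForm (Fin k), (∀ j, CForm.Guarded (φA j)) ∧ (∀ j, CForm.qr (φA j) ≤ ed1) ∧
        ∀ (j : ℕ) (W : Type) (G : SimpleGraph W), Finite W → ∀ (a : Fin k → Option W),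
          (∀ i, (A.ν i).isSome → (a (ρ i)).isSome) →
          (homD A.G A.ν (DA A B D) G (fun i => a (ρ i)) = j ↔ CForm.Sat G (φA j) a) := by
    choose φA h1 h2 h3 using fun j : ℕ => ih1 (DA A B D) ρ j
    exact ⟨φA, h1, h2, h3⟩
  obtain ⟨φB, hGB, hqB, hSB⟩ :
      ∃ φB : ℕ → CForm (Fin k), (∀ j, CForm.Guarded (φB j)) ∧ (∀ j, CForm.qr (φB j) ≤ ed2) ∧
        ∀ (j : ℕ) (W : Type) (G : SimpleGraph W), Finite W → ∀ (a : Fin k → Option W),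
          (∀ i, (B.ν i).isSome → (a (ρ i)).isSome) →
          (homD B.G B.ν (DB A B D) G (fun i => a (ρ i)) = j ↔ CForm.Sat G (φB j) a) := by
    choose φB h1 h2 h3 using fun j : ℕ => ih2 (DB A B D) ρ j
    exact ⟨φB, h1, h2, h3⟩
  by_cases hm : m = 0
  · subst hm
    refine ⟨.or (φA 0) (φB 0), ⟨hGA 0, hGB 0⟩, ?_, ?_⟩
    · show max (CForm.qr (φA 0)) (CForm.qr (φB 0)) ≤ max ed1 ed2
      exact max_le_max (hqA 0) (hqB 0)
    · intro W G hW a hyp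
      have hypA : ∀ i, (A.ν i).isSome → (a (ρ i)).isSome := fun i hi =>
        hyp i ((pnu_isSome A B).2 (Or.inl hi))
      have hypB : ∀ i, (B.ν i).isSome → (a (ρ i)).isSome := fun i hi =>
        hyp i ((pnu_isSome A B).2 (Or.inr hi))
      rw [homD_product A B D G (fun i => a (ρ i)), Nat.mul_eq_zero]
      exact or_congr (hSA 0 W G hW a hypA) (hSB 0 W G hW a hypB)
  · set L : List (CForm (Fin k)) := (List.range (m+1)).filterMap
      (fun d => if m % d = 0 ∧ 0 < d then some (CForm.and (φA d) (φB (m / d))) else none)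
      with hL
    refine ⟨bigOr v0 L, ?_, ?_, ?_⟩
    · apply guarded_bigOr
      intro ψ hψ
      obtain ⟨d, -, hd⟩ := List.mem_filterMap.1 hψ
      by_cases hc : m % d = 0 ∧ 0 < d
      · rw [if_pos hc] at hd
        cases Option.some.inj hd
        exact ⟨hGA d, hGB (m / d)⟩
      · rw [if_neg hc] at hd
        simp at hd
    · apply qr_bigOr
      intro ψ hψ
      obtain ⟨d, -, hd⟩ := List.mem_filterMap.1 hψ
      by_cases hc : m % d = 0 ∧ 0 < d
      · rw [if_pos hc] at hd
        cases Option.some.inj hd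
        show max (CForm.qr (φA d)) (CForm.qr (φB (m / d))) ≤ max ed1 ed2
        exact max_le_max (hqA d) (hqB (m / d))
      · rw [if_neg hc] at hd
        simp at hd
    · intro W G hW a hyp
      have hypA : ∀ i, (A.ν i).isSome → (a (ρ i)).isSome := fun i hi =>
        hyp i ((pnu_isSome A B).2 (Or.inl hi))
      have hypB : ∀ i, (B.ν i).isSome → (a (ρ i)).isSome := fun i hi =>
        hyp i ((pnu_isSome A B).2 (Or.inr hi))
      rw [homD_product A B D G (fun i => a (ρ i)), sat_bigOr]
      constructor
      · intro h
        have hA0 : homD A.G A.ν (DA A B D) G (fun i => a (ρ i)) ≠ 0 := by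
          intro h0
          rw [h0, zero_mul] at h
          exact hm h.symm
        have hB0 : homD B.G B.ν (DB A B D) G (fun i => a (ρ i)) ≠ 0 := by
          intro h0
          rw [h0, mul_zero] at h
          exact hm h.symm
        set d := homD A.G A.ν (DA A B D) G (fun i => a (ρ i)) with hd
        have hdvd : d ∣ m := ⟨homD B.G B.ν (DB A B D) G (fun i => a (ρ i)), h.symm⟩
        have hdm : d ≤ m := Nat.le_of_dvd (by omega) hdvd
        have hBval : homD B.G B.ν (DB A B D) G (fun i => a (ρ i)) = m / d := by
          rw [← h, Nat.mul_div_cancel_left _ (by omega : 0 < d)]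
        refine ⟨CForm.and (φA d) (φB (m / d)), ?_, ?_⟩
        · rw [hL]
          apply List.mem_filterMap.2
          refine ⟨d, List.mem_range.2 (by omega), ?_⟩
          have hmod : m % d = 0 := Nat.mod_eq_zero_of_dvd hdvd
          rw [if_pos ⟨hmod, by omega⟩]
        · exact ⟨(hSA d W G hW a hypA).1 rfl, (hSB (m / d) W G hW a hypB).1 hBval⟩
      · rintro ⟨ψ, hψ, hs⟩
        obtain ⟨d, hdr, hd⟩ := List.mem_filterMap.1 hψ
        by_cases hc : m % d = 0 ∧ 0 < d
        · rw [if_pos hc] at hd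
          cases Option.some.inj hd
          obtain ⟨hs1, hs2⟩ := hs
          rw [(hSA d W G hW a hypA).2 hs1, (hSB (m / d) W G hW a hypB).2 hs2]
          exact Nat.mul_div_cancel' (Nat.dvd_of_mod_eq_zero hc.1)
        · rw [if_neg hc] at hd
          simp at hd

end GCproof

namespace GCproof

open LGraph CT GCproof2

theorem mainThm {k : ℕ} (hk : 1 ≤ k) (t : CT k) : CT.GuardedValid t →
    ∀ (D : Set (Fin k × Fin k)) (ρ : Fin k → Fin k) (m : ℕ),
    ∃ φ : CForm (Fin k), CForm.Guarded φ ∧ CForm.qr φ ≤ CT.elimDepth t ∧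
      ∀ (W : Type) (G : SimpleGraph W), Finite W → ∀ (a : Fin k → Option W),
        (∀ i, ((CT.graphOf t).ν i).isSome → (a (ρ i)).isSome) →
        (homD (CT.graphOf t).G (CT.graphOf t).ν D G (fun i => a (ρ i)) = m ↔
          CForm.Sat G φ a) := by
  induction t with
  | leaf A =>
    intro hGV D ρ m
    exact leaf_case hk A hGV D ρ m
  | elim l t ih =>
    rintro ⟨hGVt, x, hx, mg, y, hy, hxy⟩ D ρ m
    exact elim_case hk (CT.graphOf t) l x y mg hx hy hxy (CT.elimDepth t) (ih hGVt) D ρ m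
  | prod t₁ t₂ ih₁ ih₂ =>
    rintro ⟨h1, h2⟩ D ρ m
    exact prod_case hk (CT.graphOf t₁) (CT.graphOf t₂) (CT.elimDepth t₁) (CT.elimDepth t₂)
      (ih₁ h1) (ih₂ h2) D ρ m

/-- transfer of the hom count along a labelled isomorphism -/
lemma lhom_eq_homD {k : ℕ} (A F G : LGraph k) (e : A.G ≃g F.G)
    (he : ∀ i, (A.ν i).map (fun v => e v) = F.ν i) :
    LGraph.lhomCount F G = homD A.G A.ν ∅ G.G G.ν := by
  classical
  have h0 : LGraph.lhomCount F G = Nat.card {f : F.V → G.V //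
      (∀ ⦃u v⦄, F.G.Adj u v → G.G.Adj (f u) (f v)) ∧
      ∀ i v, F.ν i = some v → ∃ w, G.ν i = some w ∧ f v = w} := by
    rw [LGraph.lhomCount, ← Nat.card_coe_set_eq]
    rfl
  rw [h0]
  apply Nat.card_congr
  have hAF : ∀ i u, A.ν i = some u → F.ν i = some (e u) := by
    intro i u h
    rw [← he i, h]
    rfl
  have hFA : ∀ i v, F.ν i = some v → A.ν i = some (e.symm v) := by
    intro i v h
    cases hA : A.ν i with
    | none => rw [← he i, hA] at h; simp at h
    | some u =>
      rw [← he i, hA] at h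
      simp only [Option.map_some] at h
      rw [← Option.some.inj h]
      simp only [RelIso.symm_apply_apply]
  refine
    { toFun := fun f => ⟨fun u => f.1 (e u), ?_, ?_⟩
      invFun := fun g => ⟨fun v => g.1 (e.symm v), ?_, ?_⟩
      left_inv := ?_
      right_inv := ?_ }
  · intro u v huv _
    exact f.2.1 (e.map_rel_iff.2 huv)
  · intro i u hi
    obtain ⟨w, hw, hfw⟩ := f.2.2 i (e u) (hAF i u hi)
    rw [hw]
    simp [hfw]
  · intro u v huv
    exact g.2.1 (e.symm u) (e.symm v) (e.symm.map_rel_iff.2 huv) (by rintro ⟨p, hp, -⟩; exact hp)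
  · intro i v hi
    refine ⟨g.1 (e.symm v), ?_, rfl⟩
    exact g.2.2 i (e.symm v) (hFA i v hi)
  · intro f
    apply Subtype.ext
    funext v
    show f.1 (e (e.symm v)) = f.1 v
    rw [RelIso.apply_symm_apply]
  · intro g
    apply Subtype.ext
    funext u
    show g.1 (e.symm (e u)) = g.1 u
    rw [RelIso.symm_apply_apply]

end GCproof

theorem gc_homcap' (k q : ℕ) (hk : 1 ≤ k) (hq : 1 ≤ q) (F : LGraph k)
    (hF : F ∈ GLclass k q) (m : ℕ) :
    ∃ φ : CForm (Fin k), CForm.Guarded φ ∧ CForm.qr φ ≤ q ∧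
      ∀ G : LGraph k, (∀ i, (F.ν i).isSome → (G.ν i).isSome) →
        (LGraph.lhomCount F G = m ↔ CForm.Sat G.G φ G.ν) := by
  classical
  obtain ⟨t, hGV, hdep, e, he⟩ := hF
  obtain ⟨φ, hG, hqr, hsat⟩ := GCproof.mainThm hk t hGV ∅ id m
  refine ⟨φ, hG, le_trans hqr hdep, ?_⟩
  intro G hlab
  haveI : Finite G.V := G.fin
  have hyp : ∀ i, ((CT.graphOf t).ν i).isSome → ((G.ν (id i))).isSome := by
    intro i hi
    apply hlab i
    rw [← he i]
    cases hA : (CT.graphOf t).ν i with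
    | none => rw [hA] at hi; simp at hi
    | some u => rfl
  have h := hsat G.V G.G G.fin G.ν hyp
  rw [GCproof.lhom_eq_homD (CT.graphOf t) F G e he]
  exact h

/-- For `F ∈ GL^k_q` and `m ≥ 0` there is a `GC^k_q`-formula `φ_m` such that for every
appropriately labelled `G`: `hom(F,G) = m` iff `G ⊨ φ_m`. -/
theorem gc_homcap (k q : ℕ) (hk : 1 ≤ k) (hq : 1 ≤ q) (F : LGraph k)
    (hF : F ∈ GLclass k q) (m : ℕ) :
    ∃ φ : CForm (Fin k), CForm.Guarded φ ∧ CForm.qr φ ≤ q ∧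
      ∀ G : LGraph k, (∀ i, (F.ν i).isSome → (G.ν i).isSome) →
        (LGraph.lhomCount F G = m ↔ CForm.Sat G.G φ G.ν) := by
  exact gc_homcap' k q hk hq F hF m
end

section
/- Let k ≥ 1 and q ≥ 0. Let G and H be finite simple graphs and let γ : {1,…,k} ⇀ V(G) × V(H) be a partial function. Then the following are equivalent: (1) Duplicator has a winning strategy in the q-round bijective k-pebble game on G and H starting in position γ; (2) for all formulae φ ∈ C^k_q whose free variables are among {x_p : p ∈ dom(γ)}, G with the interpretation x_p ↦ γ_G(p) satisfies φ if and only if H with the interpretation x_p ↦ γ_H(p) satisfies φ. -/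
set_option maxHeartbeats 1000000

/-! ## Auxiliary material for Hella's theorem -/

section HellaAux

open CForm

variable {k n m : ℕ}

lemma dupWins_zero {V W : Type*} (G : SimpleGraph V) (H : SimpleGraph W) (k : ℕ)
    (γ : Fin k → Option (V × W)) : DupWins G H k 0 γ ↔ PartialIso G H γ := Iff.rfl

lemma dupWins_succ {V W : Type*} (G : SimpleGraph V) (H : SimpleGraph W) (k q : ℕ)
    (γ : Fin k → Option (V × W)) :
    DupWins G H k (q + 1) γ ↔ (PartialIso G H γ ∧
      ∀ p : Fin k, ∃ f : V ≃ W, ∀ v : V,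
        DupWins G H k q (fun j => if j = p then some (v, f v) else γ j)) := by
  simp only [DupWins]

lemma dupWins_partialIso {V W : Type*} {G : SimpleGraph V} {H : SimpleGraph W} {k q : ℕ}
    {γ : Fin k → Option (V × W)} (h : DupWins G H k q γ) : PartialIso G H γ := by
  cases q with
  | zero => exact h
  | succ q => exact h.1

/-- A finite conjunction, with default conjunct `eq p p`. -/
def conjList (p : Fin k) : List (CForm (Fin k)) → CForm (Fin k)
  | [] => .eq p p
  | φ :: L => .and φ (conjList p L)

lemma qr_conjList {p : Fin k} {q : ℕ} {L : List (CForm (Fin k))}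
    (h : ∀ φ ∈ L, qr φ ≤ q) : qr (conjList p L) ≤ q := by
  induction L with
  | nil => simp [conjList, qr]
  | cons φ L ih =>
    simp only [conjList, qr, max_le_iff]
    exact ⟨h φ (by simp), ih fun ψ hψ => h ψ (by simp [hψ])⟩

lemma freeVars_conjList {p : Fin k} {L : List (CForm (Fin k))} {i : Fin k}
    (h : i ∈ freeVars (conjList p L)) : i = p ∨ ∃ φ ∈ L, i ∈ freeVars φ := by
  induction L with
  | nil =>
    simp only [conjList, freeVars, Finset.mem_insert, Finset.mem_singleton, or_self] at h
    exact Or.inl h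
  | cons φ L ih =>
    simp only [conjList, freeVars, Finset.mem_union] at h
    rcases h with h | h
    · exact Or.inr ⟨φ, by simp, h⟩
    · rcases ih h with h' | ⟨ψ, hψ, hiψ⟩
      · exact Or.inl h'
      · exact Or.inr ⟨ψ, by simp [hψ], hiψ⟩

lemma sat_conjList {V : Type*} (G : SimpleGraph V) {p : Fin k} {a : Fin k → Option V}
    (ha : (a p).isSome) (L : List (CForm (Fin k))) :
    Sat G (conjList p L) a ↔ ∀ φ ∈ L, Sat G φ a := by
  induction L with
  | nil =>
    obtain ⟨v, hv⟩ := Option.isSome_iff_exists.1 ha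
    simp [conjList, Sat, hv]
  | cons φ L ih =>
    simp only [conjList, Sat, ih, List.mem_cons, forall_eq_or_imp]

lemma sat_count_iff {V : Type*} [Finite V] (G : SimpleGraph V) (c : ℕ) (i : Fin k)
    (φ : CForm (Fin k)) (a : Fin k → Option V) :
    Sat G (.count c i φ) a ↔
      c ≤ {v : V | Sat G φ (fun j => if j = i then some v else a j)}.ncard := by
  constructor
  · rintro ⟨s, hc, hall⟩
    refine hc.trans ?_
    rw [← Set.ncard_coe_finset]
    exact Set.ncard_le_ncard (fun v hv => hall v (by exact_mod_cast hv)) (Set.toFinite _)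
  · intro h
    have hfin : {v : V | Sat G φ (fun j => if j = i then some v else a j)}.Finite :=
      Set.toFinite _
    exact ⟨hfin.toFinset, by rwa [Set.ncard_eq_toFinset_card _ hfin] at h,
      fun v hv => hfin.mem_toFinset.1 hv⟩

lemma distinguish (cond P Q : CForm (Fin k) → Prop)
    (hc : ∀ φ, cond (.not φ) ↔ cond φ)
    (hP : ∀ φ, P (.not φ) ↔ ¬ P φ) (hQ : ∀ φ, Q (.not φ) ↔ ¬ Q φ)
    (h : {φ | cond φ ∧ P φ} ≠ {φ | cond φ ∧ Q φ}) :
    ∃ φ, (cond φ ∧ P φ) ∧ ¬ Q φ := by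
  by_contra hno
  push_neg at hno
  refine h (Set.ext fun ψ => ?_)
  simp only [Set.mem_setOf_eq]
  constructor
  · rintro ⟨h1, h2⟩; exact ⟨h1, hno ψ ⟨h1, h2⟩⟩
  · rintro ⟨h1, h2⟩
    refine ⟨h1, ?_⟩
    by_contra h3
    exact (hQ ψ).1 (hno (.not ψ) ⟨(hc ψ).2 h1, (hP ψ).2 h3⟩) h2

lemma nat_eq_of_le_iff {A B : ℕ} (h : ∀ c, c ≤ A ↔ c ≤ B) : A = B :=
  le_antisymm ((h A).1 le_rfl) ((h B).2 le_rfl)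

lemma equiv_of_fiber_card {α β Φ : Type*} [Finite α] [Finite β]
    (s : α → Φ) (t : β → Φ)
    (h : ∀ τ, Nat.card {a // s a = τ} = Nat.card {b // t b = τ}) :
    ∃ f : α ≃ β, ∀ a, t (f a) = s a := by
  have fib : ∀ τ, Nonempty ({a // s a = τ} ≃ {b // t b = τ}) := fun τ =>
    Finite.card_eq.1 (h τ)
  let E : ∀ τ, {a // s a = τ} ≃ {b // t b = τ} := fun τ => (fib τ).some
  refine ⟨(Equiv.sigmaFiberEquiv s).symm.trans
    ((Equiv.sigmaCongrRight E).trans (Equiv.sigmaFiberEquiv t)), fun a => ?_⟩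
  have h1 : (Equiv.sigmaFiberEquiv s).symm a = ⟨s a, a, rfl⟩ := rfl
  simp only [Equiv.trans_apply, h1, Equiv.sigmaCongrRight_apply]
  exact (E (s a) ⟨a, rfl⟩).2

lemma partialIso_of_sat {G : SimpleGraph (Fin n)} {H : SimpleGraph (Fin m)}
    {γ : Fin k → Option (Fin n × Fin m)}
    (h : ∀ φ : CForm (Fin k), qr φ = 0 → (∀ i ∈ freeVars φ, (γ i).isSome) →
      (Sat G φ (fun i => (γ i).map Prod.fst) ↔ Sat H φ (fun i => (γ i).map Prod.snd))) :
    PartialIso G H γ := by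
  intro i j vi wi vj wj hi hj
  have hdom : ∀ l ∈ ({i, j} : Finset (Fin k)), (γ l).isSome := by
    intro l hl
    rcases Finset.mem_insert.1 hl with rfl | hl
    · simp [hi]
    · rw [Finset.mem_singleton.1 hl, hj]; rfl
  constructor
  · have := h (.eq i j) rfl hdom
    simp only [Sat, hi, hj, Option.map_some] at this
    constructor
    · intro hv
      obtain ⟨w, hw1, hw2⟩ := this.1 ⟨vj, by rw [hv], rfl⟩
      rw [Option.some_inj] at hw1 hw2; rw [hw1, hw2]
    · intro hw
      obtain ⟨v, hv1, hv2⟩ := this.2 ⟨wj, by rw [hw], rfl⟩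
      rw [Option.some_inj] at hv1 hv2; rw [hv1, hv2]
  · have := h (.adj i j) rfl hdom
    simp only [Sat, hi, hj, Option.map_some] at this
    constructor
    · intro hv
      obtain ⟨v, w, hv1, hv2, hadj⟩ := this.1 ⟨vi, vj, rfl, rfl, hv⟩
      rw [Option.some_inj] at hv1 hv2; rw [hv1, hv2]; exact hadj
    · intro hw
      obtain ⟨v, w, hv1, hv2, hadj⟩ := this.2 ⟨wi, wj, rfl, rfl, hw⟩
      rw [Option.some_inj] at hv1 hv2; rw [hv1, hv2]; exact hadj

lemma hella_forward (G : SimpleGraph (Fin n)) (H : SimpleGraph (Fin m))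
    (φ : CForm (Fin k)) :
    ∀ (q : ℕ) (γ : Fin k → Option (Fin n × Fin m)), DupWins G H k q γ → qr φ ≤ q →
      (∀ i ∈ freeVars φ, (γ i).isSome) →
      (Sat G φ (fun i => (γ i).map Prod.fst) ↔ Sat H φ (fun i => (γ i).map Prod.snd)) := by
  induction φ with
  | eq i j =>
    intro q γ hD _ hfv
    have hpi := dupWins_partialIso hD
    obtain ⟨⟨vi, wi⟩, hi⟩ := Option.isSome_iff_exists.1
      (hfv i (by simp [freeVars]))
    obtain ⟨⟨vj, wj⟩, hj⟩ := Option.isSome_iff_exists.1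
      (hfv j (by simp [freeVars]))
    have heq := (hpi i j vi wi vj wj hi hj).1
    simp only [Sat, hi, hj, Option.map_some]
    constructor
    · rintro ⟨v, hv1, hv2⟩
      rw [Option.some_inj] at hv1 hv2
      exact ⟨wi, rfl, by rw [← heq.1 (hv1.trans hv2.symm)]⟩
    · rintro ⟨w, hw1, hw2⟩
      rw [Option.some_inj] at hw1 hw2
      exact ⟨vi, rfl, by rw [← heq.2 (hw1.trans hw2.symm)]⟩
  | adj i j =>
    intro q γ hD _ hfv
    have hpi := dupWins_partialIso hD
    obtain ⟨⟨vi, wi⟩, hi⟩ := Option.isSome_iff_exists.1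
      (hfv i (by simp [freeVars]))
    obtain ⟨⟨vj, wj⟩, hj⟩ := Option.isSome_iff_exists.1
      (hfv j (by simp [freeVars]))
    have hadj := (hpi i j vi wi vj wj hi hj).2
    simp only [Sat, hi, hj, Option.map_some]
    constructor
    · rintro ⟨v, w, hv, hw, h⟩
      rw [Option.some_inj] at hv hw
      exact ⟨wi, wj, rfl, rfl, hadj.1 (by rw [hv, hw]; exact h)⟩
    · rintro ⟨v, w, hv, hw, h⟩
      rw [Option.some_inj] at hv hw
      exact ⟨vi, vj, rfl, rfl, hadj.2 (by rw [hv, hw]; exact h)⟩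
  | not φ ih =>
    intro q γ hD hqr hfv
    exact not_congr (ih q γ hD hqr hfv)
  | or φ ψ ihφ ihψ =>
    intro q γ hD hqr hfv
    have hqr' : max (qr φ) (qr ψ) ≤ q := hqr
    exact or_congr
      (ihφ q γ hD (max_le_iff.1 hqr').1 fun i hi => hfv i (Finset.mem_union_left _ hi))
      (ihψ q γ hD (max_le_iff.1 hqr').2 fun i hi => hfv i (Finset.mem_union_right _ hi))
  | and φ ψ ihφ ihψ =>
    intro q γ hD hqr hfv
    have hqr' : max (qr φ) (qr ψ) ≤ q := hqr
    exact and_congr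
      (ihφ q γ hD (max_le_iff.1 hqr').1 fun i hi => hfv i (Finset.mem_union_left _ hi))
      (ihψ q γ hD (max_le_iff.1 hqr').2 fun i hi => hfv i (Finset.mem_union_right _ hi))
  | count c i φ ih =>
    intro q γ hD hqr hfv
    cases q with
    | zero =>
      have : qr φ + 1 ≤ 0 := hqr
      omega
    | succ q =>
      obtain ⟨-, hmove⟩ := (dupWins_succ G H k q γ).1 hD
      obtain ⟨f, hf⟩ := hmove i
      have hqr' : qr φ ≤ q := by
        have : qr φ + 1 ≤ q + 1 := hqr
        omega
      have key : ∀ v : Fin n,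
          (Sat G φ (fun j => if j = i then some v else (γ j).map Prod.fst) ↔
           Sat H φ (fun j => if j = i then some (f v) else (γ j).map Prod.snd)) := by
        intro v
        have h1 := ih q (fun j => if j = i then some (v, f v) else γ j) (hf v) hqr' ?_
        · have e1 : (fun l => ((if l = i then some (v, f v) else γ l)).map Prod.fst)
              = fun l => if l = i then some v else (γ l).map Prod.fst := by
            funext l; by_cases h : l = i <;> simp [h]
          have e2 : (fun l => ((if l = i then some (v, f v) else γ l)).map Prod.snd)
              = fun l => if l = i then some (f v) else (γ l).map Prod.snd := by
            funext l; by_cases h : l = i <;> simp [h]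
          rwa [e1, e2] at h1
        · intro l hl
          by_cases h : l = i
          · simp [h]
          · have hl' : l ∈ freeVars (.count c i φ) := Finset.mem_erase.2 ⟨h, hl⟩
            simpa [h] using hfv l hl'
      constructor
      · rintro ⟨s, hc, hall⟩
        refine ⟨s.image f, ?_, ?_⟩
        · rwa [Finset.card_image_of_injective _ f.injective]
        · intro w hw
          obtain ⟨v, hv, rfl⟩ := Finset.mem_image.1 hw
          exact (key v).1 (hall v hv)
      · rintro ⟨s, hc, hall⟩
        refine ⟨s.image f.symm, ?_, ?_⟩
        · rwa [Finset.card_image_of_injective _ f.symm.injective]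
        · intro v hv
          obtain ⟨w, hw, rfl⟩ := Finset.mem_image.1 hv
          refine (key _).2 ?_
          rw [f.apply_symm_apply]
          exact hall w hw

end HellaAux
section HellaAux2

open CForm

variable {k n m : ℕ}

/-- Assignment condition for formulae usable after placing pebble `p`. -/
def Cond (q : ℕ) {n m : ℕ} (γ : Fin k → Option (Fin n × Fin m)) (p : Fin k)
    (φ : CForm (Fin k)) : Prop :=
  qr φ ≤ q ∧ ∀ i ∈ freeVars φ, i = p ∨ (γ i).isSome

abbrev updFst {n m : ℕ} (γ : Fin k → Option (Fin n × Fin m)) (p : Fin k) (v : Fin n) :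
    Fin k → Option (Fin n) := fun j => if j = p then some v else (γ j).map Prod.fst

abbrev updSnd {n m : ℕ} (γ : Fin k → Option (Fin n × Fin m)) (p : Fin k) (w : Fin m) :
    Fin k → Option (Fin m) := fun j => if j = p then some w else (γ j).map Prod.snd

/-- The `C`-type of a vertex `v` of `G` over position `γ` with pebble `p` on `v`. -/
def sType (G : SimpleGraph (Fin n)) (q : ℕ) (γ : Fin k → Option (Fin n × Fin m)) (p : Fin k)
    (v : Fin n) : Set (CForm (Fin k)) :=
  {φ | Cond q γ p φ ∧ Sat G φ (updFst γ p v)}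

/-- The `C`-type of a vertex `w` of `H` over position `γ` with pebble `p` on `w`. -/
def tType (H : SimpleGraph (Fin m)) (q : ℕ) (γ : Fin k → Option (Fin n × Fin m)) (p : Fin k)
    (w : Fin m) : Set (CForm (Fin k)) :=
  {φ | Cond q γ p φ ∧ Sat H φ (updSnd γ p w)}

lemma exists_type_formula {q : ℕ} (G : SimpleGraph (Fin n)) (H : SimpleGraph (Fin m))
    (γ : Fin k → Option (Fin n × Fin m)) (p : Fin k) (τ : Set (CForm (Fin k)))
    (hmem : ∀ φ ∈ τ, Cond q γ p φ)
    (heq : CForm.eq p p ∈ τ)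
    (dG : ∀ v, sType G q γ p v ≠ τ → ∃ φ ∈ τ, ¬ Sat G φ (updFst γ p v))
    (dH : ∀ w, tType H q γ p w ≠ τ → ∃ φ ∈ τ, ¬ Sat H φ (updSnd γ p w)) :
    ∃ χ, Cond q γ p χ ∧
      (∀ v, Sat G χ (updFst γ p v) ↔ sType G q γ p v = τ) ∧
      (∀ w, Sat H χ (updSnd γ p w) ↔ tType H q γ p w = τ) := by
  classical
  choose FG hFGτ hFGsat using dG
  choose FH hFHτ hFHsat using dH
  set fG : Fin n → CForm (Fin k) :=
    fun v => if h : sType G q γ p v = τ then .eq p p else FG v h with hfG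
  set fH : Fin m → CForm (Fin k) :=
    fun w => if h : tType H q γ p w = τ then .eq p p else FH w h with hfH
  set L : List (CForm (Fin k)) :=
    ((List.finRange n).map fG) ++ ((List.finRange m).map fH) with hL
  have hLτ : ∀ φ ∈ L, φ ∈ τ := by
    intro φ hφ
    rw [hL] at hφ
    rcases List.mem_append.1 hφ with hφ | hφ
    · obtain ⟨v, -, rfl⟩ := List.mem_map.1 hφ
      by_cases h : sType G q γ p v = τ
      · simpa [hfG, h] using heq
      · simpa [hfG, h] using hFGτ v h
    · obtain ⟨w, -, rfl⟩ := List.mem_map.1 hφ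
      by_cases h : tType H q γ p w = τ
      · simpa [hfH, h] using heq
      · simpa [hfH, h] using hFHτ w h
  have hLc : ∀ φ ∈ L, Cond q γ p φ := fun φ hφ => hmem φ (hLτ φ hφ)
  refine ⟨conjList p L, ⟨qr_conjList (fun φ hφ => (hLc φ hφ).1), ?_⟩, ?_, ?_⟩
  · intro i hi
    rcases freeVars_conjList hi with rfl | ⟨φ, hφ, hiφ⟩
    · exact Or.inl rfl
    · exact (hLc φ hφ).2 i hiφ
  · intro v
    rw [sat_conjList G (by simp [updFst]) L]
    constructor
    · intro hall
      by_contra hne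
      have hmemL : fG v ∈ L := by
        rw [hL]
        exact List.mem_append_left _ (List.mem_map.2 ⟨v, List.mem_finRange v, rfl⟩)
      have hv : fG v = FG v hne := by
        rw [hfG]
        exact dif_neg hne
      exact hFGsat v hne (hv ▸ hall (fG v) hmemL)
    · intro hEq φ hφ
      have : φ ∈ sType G q γ p v := hEq ▸ hLτ φ hφ
      exact this.2
  · intro w
    rw [sat_conjList H (by simp [updSnd]) L]
    constructor
    · intro hall
      by_contra hne
      have hmemL : fH w ∈ L := by
        rw [hL]
        exact List.mem_append_right _ (List.mem_map.2 ⟨w, List.mem_finRange w, rfl⟩)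
      have hw : fH w = FH w hne := by
        rw [hfH]
        exact dif_neg hne
      exact hFHsat w hne (hw ▸ hall (fH w) hmemL)
    · intro hEq φ hφ
      have : φ ∈ tType H q γ p w := hEq ▸ hLτ φ hφ
      exact this.2

end HellaAux2
section HellaAux3

open CForm

variable {k n m : ℕ}

lemma exists_bijection {q : ℕ} (G : SimpleGraph (Fin n)) (H : SimpleGraph (Fin m))
    (γ : Fin k → Option (Fin n × Fin m)) (p : Fin k)
    (Hyp : ∀ φ : CForm (Fin k), qr φ ≤ q + 1 → (∀ i ∈ freeVars φ, (γ i).isSome) →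
      (Sat G φ (fun i => (γ i).map Prod.fst) ↔ Sat H φ (fun i => (γ i).map Prod.snd))) :
    ∃ f : Fin n ≃ Fin m, ∀ v, tType H q γ p (f v) = sType G q γ p v := by
  classical
  have hcnot : ∀ φ : CForm (Fin k), Cond q γ p (CForm.not φ) ↔ Cond q γ p φ :=
    fun φ => Iff.rfl
  have fib : ∀ τ : Set (CForm (Fin k)),
      Nat.card {v : Fin n // sType G q γ p v = τ} =
      Nat.card {w : Fin m // tType H q γ p w = τ} := by
    intro τ
    by_cases hatt : (∃ v₀, sType G q γ p v₀ = τ) ∨ (∃ w₀, tType H q γ p w₀ = τ)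
    · have dG : ∀ v, sType G q γ p v ≠ τ → ∃ φ ∈ τ, ¬ Sat G φ (updFst γ p v) := by
        intro v hv
        rcases hatt with ⟨v₀, hv₀⟩ | ⟨w₀, hw₀⟩
        · obtain ⟨φ, hφ, hns⟩ := distinguish (Cond q γ p)
            (fun ψ => Sat G ψ (updFst γ p v₀)) (fun ψ => Sat G ψ (updFst γ p v))
            hcnot (fun ψ => Iff.rfl) (fun ψ => Iff.rfl)
            (fun hEq => hv (hEq.symm.trans hv₀))
          exact ⟨φ, hv₀ ▸ (hφ : φ ∈ sType G q γ p v₀), hns⟩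
        · obtain ⟨φ, hφ, hns⟩ := distinguish (Cond q γ p)
            (fun ψ => Sat H ψ (updSnd γ p w₀)) (fun ψ => Sat G ψ (updFst γ p v))
            hcnot (fun ψ => Iff.rfl) (fun ψ => Iff.rfl)
            (fun hEq => hv (hEq.symm.trans hw₀))
          exact ⟨φ, hw₀ ▸ (hφ : φ ∈ tType H q γ p w₀), hns⟩
      have dH : ∀ w, tType H q γ p w ≠ τ → ∃ φ ∈ τ, ¬ Sat H φ (updSnd γ p w) := by
        intro w hw
        rcases hatt with ⟨v₀, hv₀⟩ | ⟨w₀, hw₀⟩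
        · obtain ⟨φ, hφ, hns⟩ := distinguish (Cond q γ p)
            (fun ψ => Sat G ψ (updFst γ p v₀)) (fun ψ => Sat H ψ (updSnd γ p w))
            hcnot (fun ψ => Iff.rfl) (fun ψ => Iff.rfl)
            (fun hEq => hw (hEq.symm.trans hv₀))
          exact ⟨φ, hv₀ ▸ (hφ : φ ∈ sType G q γ p v₀), hns⟩
        · obtain ⟨φ, hφ, hns⟩ := distinguish (Cond q γ p)
            (fun ψ => Sat H ψ (updSnd γ p w₀)) (fun ψ => Sat H ψ (updSnd γ p w))
            hcnot (fun ψ => Iff.rfl) (fun ψ => Iff.rfl)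
            (fun hEq => hw (hEq.symm.trans hw₀))
          exact ⟨φ, hw₀ ▸ (hφ : φ ∈ tType H q γ p w₀), hns⟩
      have hmem : ∀ φ ∈ τ, Cond q γ p φ := by
        rcases hatt with ⟨v₀, hv₀⟩ | ⟨w₀, hw₀⟩
        · intro φ hφ; rw [← hv₀] at hφ; exact hφ.1
        · intro φ hφ; rw [← hw₀] at hφ; exact hφ.1
      have heqm : CForm.eq p p ∈ τ := by
        have hcxx : Cond q γ p (CForm.eq p p) := by
          refine ⟨by simp [qr], fun i hi => ?_⟩
          left
          simpa [freeVars] using hi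
        rcases hatt with ⟨v₀, hv₀⟩ | ⟨w₀, hw₀⟩
        · rw [← hv₀]
          exact ⟨hcxx, ⟨v₀, by simp [updFst], by simp [updFst]⟩⟩
        · rw [← hw₀]
          exact ⟨hcxx, ⟨w₀, by simp [updSnd], by simp [updSnd]⟩⟩
      obtain ⟨χ, hχc, hχG, hχH⟩ := exists_type_formula G H γ p τ hmem heqm dG dH
      have hfv : ∀ i ∈ (freeVars χ).erase p, (γ i).isSome := by
        intro i hi
        have hi' := Finset.mem_erase.1 hi
        rcases hχc.2 i hi'.2 with h | h
        · exact absurd h hi'.1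
        · exact h
      have hcount : ∀ c : ℕ,
          (c ≤ {v : Fin n | Sat G χ (updFst γ p v)}.ncard ↔
           c ≤ {w : Fin m | Sat H χ (updSnd γ p w)}.ncard) := by
        intro c
        have h0 := Hyp (CForm.count c p χ) (Nat.succ_le_succ hχc.1) hfv
        have e1 := sat_count_iff G c p χ (fun i => (γ i).map Prod.fst)
        have e2 := sat_count_iff H c p χ (fun i => (γ i).map Prod.snd)
        exact (e1.symm.trans h0).trans e2
      have hsetG : {v : Fin n | Sat G χ (updFst γ p v)} = {v | sType G q γ p v = τ} :=
        Set.ext fun v => hχG v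
      have hsetH : {w : Fin m | Sat H χ (updSnd γ p w)} = {w | tType H q γ p w = τ} :=
        Set.ext fun w => hχH w
      have hcard : {v : Fin n | sType G q γ p v = τ}.ncard
          = {w : Fin m | tType H q γ p w = τ}.ncard := by
        apply nat_eq_of_le_iff
        intro c
        rw [← hsetG, ← hsetH]
        exact hcount c
      calc Nat.card {v : Fin n // sType G q γ p v = τ}
          = {v : Fin n | sType G q γ p v = τ}.ncard :=
            Nat.card_coe_set_eq {v : Fin n | sType G q γ p v = τ}
        _ = {w : Fin m | tType H q γ p w = τ}.ncard := hcard
        _ = Nat.card {w : Fin m // tType H q γ p w = τ} :=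
            (Nat.card_coe_set_eq {w : Fin m | tType H q γ p w = τ}).symm
    · push_neg at hatt
      haveI h1 : IsEmpty {v : Fin n // sType G q γ p v = τ} := ⟨fun x => hatt.1 x.1 x.2⟩
      haveI h2 : IsEmpty {w : Fin m // tType H q γ p w = τ} := ⟨fun x => hatt.2 x.1 x.2⟩
      rw [Nat.card_of_isEmpty, Nat.card_of_isEmpty]
  exact equiv_of_fiber_card (sType G q γ p) (tType H q γ p) fib

end HellaAux3
/-- Duplicator wins the `q`-round bijective `k`-pebble game from position `γ` iff `G` and
`H` satisfy the same `C^k_q`-formulae with free variables in the domain of `γ`,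
interpreted along `γ`. -/
theorem hella_bijective_game (k : ℕ) (hk : 1 ≤ k) (q : ℕ) {n m : ℕ}
    (G : SimpleGraph (Fin n)) (H : SimpleGraph (Fin m))
    (γ : Fin k → Option (Fin n × Fin m)) :
    DupWins G H k q γ ↔
      ∀ φ : CForm (Fin k), CForm.qr φ ≤ q → (∀ i ∈ CForm.freeVars φ, (γ i).isSome) →
        (CForm.Sat G φ (fun i => (γ i).map Prod.fst) ↔
          CForm.Sat H φ (fun i => (γ i).map Prod.snd)) := by
  induction q generalizing γ with
  | zero =>
    rw [dupWins_zero]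
    constructor
    · intro hpi φ hqr hfv
      exact hella_forward G H φ 0 γ hpi hqr hfv
    · intro h
      exact partialIso_of_sat fun φ h0 hfv => h φ (le_of_eq h0) hfv
  | succ q IH =>
    constructor
    · intro hD φ hqr hfv
      exact hella_forward G H φ (q + 1) γ hD hqr hfv
    · intro h
      rw [dupWins_succ]
      refine ⟨partialIso_of_sat fun φ h0 hfv => h φ (by omega) hfv, fun p => ?_⟩
      obtain ⟨f, hf⟩ := exists_bijection G H γ p h
      refine ⟨f, fun v => ?_⟩
      apply (IH (fun j => if j = p then some (v, f v) else γ j)).2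
      intro φ hqr hfv
      have hc : Cond q γ p φ := by
        refine ⟨hqr, fun i hi => ?_⟩
        by_cases hip : i = p
        · exact Or.inl hip
        · right
          have := hfv i hi
          simpa [hip] using this
      have e1 : (fun i => ((if i = p then some (v, f v) else γ i)).map Prod.fst)
          = updFst γ p v := by
        funext j; by_cases hj : j = p <;> simp [hj, updFst]
      have e2 : (fun i => ((if i = p then some (v, f v) else γ i)).map Prod.snd)
          = updSnd γ p (f v) := by
        funext j; by_cases hj : j = p <;> simp [hj, updSnd]
      rw [e1, e2]
      have hmem := hf v
      constructor
      · intro hs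
        have hx : CForm.Sat H φ (updSnd γ p (f v)) := by
          have : φ ∈ sType G q γ p v := ⟨hc, hs⟩
          rw [← hmem] at this
          exact this.2
        exact hx
      · intro hs
        have hx : CForm.Sat G φ (updFst γ p v) := by
          have : φ ∈ tType H q γ p (f v) := ⟨hc, hs⟩
          rw [hmem] at this
          exact this.2
        exact hx
end
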